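/- arXiv:2401.07101 — 2 statements merged into one kernel-verified Lean document; each statement's English description precedes it below -/
import Mathlib

section
/- Let G be the group of order p^{2r+1}·2^n described in the context and let K be a subgroup of P with K normal in P, K ≠ P, and P/K cyclic. Assume that for no j with 1 ≤ j ≤ 2^{n−1} does K contain the subgroup generated by x, y₁^{k^j}z₁, …, y_r^{k^j}z_r, and assume that K contains the subgroup generated by x, y₁, …, y_r or K contains the subgroup generated by x, z₁, …, z_r. Then N_G(K) equals the subgroup generated by P and a, and (P,K) is a strong Shoda pair of G. -/
open scoped Classical

namespace Paper

variable {G : Type*} [Group G] [Fintype G]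

noncomputable instance : Fintype (Subgroup G) :=
  Fintype.ofInjective (fun H : Subgroup G => (H : Set G)) SetLike.coe_injective

/-- `M̂ = (1/|M|) ∑_{m ∈ M} m` in the rational group algebra `ℚ[G]`. -/
noncomputable def hat (M : Subgroup G) : MonoidAlgebra ℚ G :=
  (Nat.card M : ℚ)⁻¹ • ∑ m : M, MonoidAlgebra.of ℚ G (m : G)

/-- `L` is a normal subgroup of `H` properly containing `K`. -/
def NormalOver (H K L : Subgroup G) : Prop :=
  L ≤ H ∧ K < L ∧ ∀ h ∈ H, ∀ g ∈ L, h⁻¹ * g * h ∈ L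

/-- `L` is minimal among the normal subgroups of `H` properly containing `K`. -/
def MinimalOver (H K L : Subgroup G) : Prop :=
  NormalOver H K L ∧ ∀ L' : Subgroup G, NormalOver H K L' → L' ≤ L → L' = L

/-- `ε(H,K) = K̂` if `H = K`, and otherwise `∏_L (K̂ - L̂)`, the product running over
the normal subgroups `L` of `H` minimal with respect to properly containing `K`
(all such factors commute pairwise, so the product is order-independent). -/
noncomputable def eps (H K : Subgroup G) : MonoidAlgebra ℚ G :=
  if H = K then hat K
  else (({L : Subgroup G | MinimalOver H K L}.toFinset).toList.map
    fun L => hat K - hat L).prod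

/-- The subgroup `[H,g] = ⟨g⁻¹h⁻¹gh : h ∈ H⟩`. -/
def commSub (H : Subgroup G) (g : G) : Subgroup G :=
  Subgroup.closure {c : G | ∃ h ∈ H, c = g⁻¹ * h⁻¹ * g * h}

/-- The quotient `H/K` is cyclic (elementwise formulation: some `h ∈ H` is such that
every `g ∈ H` lies in a coset `h^m K`). -/
def CyclicQuot (H K : Subgroup G) : Prop :=
  ∃ h ∈ H, ∀ g ∈ H, ∃ m : ℤ, (h ^ m)⁻¹ * g ∈ K

/-- `K` is normal in `H` (elementwise formulation). -/
def NormalIn (H K : Subgroup G) : Prop :=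
  ∀ h ∈ H, ∀ g ∈ K, h⁻¹ * g * h ∈ K

/-- `(H,K)` is a Shoda pair of `G`. -/
def IsShodaPair (H K : Subgroup G) : Prop :=
  K ≤ H ∧ NormalIn H K ∧ CyclicQuot H K ∧
    ∀ g : G, commSub H g ⊓ H ≤ K → g ∈ H

/-- `(H,K)` is a strong Shoda pair of `G`: conditions (SS1), (SS2), (SS3).
Maximal abelianness of `H/K` in `N_G(K)/K` is phrased via the Galois correspondence
between subgroups of `N_G(K)/K` and subgroups of `G` lying between `K` and `N_G(K)`. -/
def IsStrongShodaPair (H K : Subgroup G) : Prop :=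
  -- (SS1): `H` is a normal subgroup of `N_G(K)`
  (H ≤ Subgroup.normalizer (K : Set G) ∧ ∀ g ∈ Subgroup.normalizer (K : Set G), ∀ h ∈ H, g⁻¹ * h * g ∈ H) ∧
  -- (SS2): `H/K` is cyclic and a maximal abelian subgroup of `N_G(K)/K`
  (CyclicQuot H K ∧
    (∀ h₁ ∈ H, ∀ h₂ ∈ H, h₁⁻¹ * h₂⁻¹ * h₁ * h₂ ∈ K) ∧
    ∀ C : Subgroup G, K ≤ C → C ≤ Subgroup.normalizer (K : Set G) →
      (∀ c₁ ∈ C, ∀ c₂ ∈ C, c₁⁻¹ * c₂⁻¹ * c₁ * c₂ ∈ K) → H ≤ C → C = H) ∧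
  -- (SS3): `ε(H,K)·(g⁻¹ ε(H,K) g) = 0` for `g ∉ N_G(K)`
  (∀ g : G, g ∉ Subgroup.normalizer (K : Set G) →
    eps H K * (MonoidAlgebra.of ℚ G g⁻¹ * eps H K * MonoidAlgebra.of ℚ G g) = 0)


/-- The data of the group `G = P ⋊ D_{2^n}` of order `p^{2r+1}·2^n`: an odd prime
`p ≡ 1 (mod 4)`, `r ≥ 1`, `n ≥ 3` with `2^{n-1}` the exact power of `2` dividing
`p - 1`, an integer `k` of multiplicative order `2^{n-1}` modulo `p` with inverse `q`
modulo `p`, and generators `x, y₁, …, y_r, z₁, …, z_r, a, b` of `G` subject to the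
listed relations (commutator convention `[u,v] = u⁻¹v⁻¹uv`). -/
structure GData (G : Type*) [Group G] [Fintype G] where
  p : ℕ
  r : ℕ
  n : ℕ
  k : ℕ
  q : ℕ
  x : G
  y : Fin r → G
  z : Fin r → G
  a : G
  b : G
  hp : p.Prime
  hp4 : p % 4 = 1
  hr : 1 ≤ r
  hn : 3 ≤ n
  hdvd : 2 ^ (n - 1) ∣ p - 1
  hndvd : ¬ 2 ^ n ∣ p - 1
  hordk : orderOf ((k : ZMod p)) = 2 ^ (n - 1)
  hkq : ((k : ZMod p)) * (q : ZMod p) = 1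
  hcard : Fintype.card G = p ^ (2 * r + 1) * 2 ^ n
  hgen : Subgroup.closure (({x, a, b} : Set G) ∪ Set.range y ∪ Set.range z) = ⊤
  hxp : x ^ p = 1
  hyp : ∀ i, y i ^ p = 1
  hzp : ∀ i, z i ^ p = 1
  han : a ^ 2 ^ (n - 1) = 1
  hb2 : b ^ 2 = 1
  hxy : ∀ i, x⁻¹ * (y i)⁻¹ * x * y i = 1
  hxz : ∀ i, x⁻¹ * (z i)⁻¹ * x * z i = 1
  hyy : ∀ i j, (y i)⁻¹ * (y j)⁻¹ * y i * y j = 1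
  hzz : ∀ i j, (z i)⁻¹ * (z j)⁻¹ * z i * z j = 1
  hyz : ∀ i, (y i)⁻¹ * (z i)⁻¹ * y i * z i = x
  hyz' : ∀ i j, i ≠ j → (y i)⁻¹ * (z j)⁻¹ * y i * z j = 1
  hax : a⁻¹ * x⁻¹ * a * x = 1
  hay : ∀ i, a⁻¹ * (y i)⁻¹ * a * y i = (y i) ^ (1 - (k : ℤ))
  haz : ∀ i, a⁻¹ * (z i)⁻¹ * a * z i = (z i) ^ (1 - (q : ℤ))
  hbx : b⁻¹ * x⁻¹ * b * x = x ^ 2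
  hby : ∀ i, b⁻¹ * (y i)⁻¹ * b * y i = z i * y i
  hbz : ∀ i, b⁻¹ * (z i)⁻¹ * b * z i = y i * z i
  hba : b⁻¹ * a⁻¹ * b * a = a ^ 2

variable {G : Type*} [Group G] [Fintype G]

/-- The subgroup `P = ⟨x, y₁, …, y_r, z₁, …, z_r⟩` of `G`. -/
def GData.P (d : GData G) : Subgroup G :=
  Subgroup.closure (({d.x} : Set G) ∪ Set.range d.y ∪ Set.range d.z)

end Paper





section Alg

namespace SSP

set_option linter.unusedSectionVars false
variable {G : Type*} [Group G] [Fintype G]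

open MonoidAlgebra

lemma card_ne_zero (A : Subgroup G) : (Nat.card A : ℚ) ≠ 0 := by
  have : 0 < Nat.card A := Nat.card_pos
  exact_mod_cast this.ne'

lemma hat_mul_of {A : Subgroup G} {u : G} (hu : u ∈ A) :
    Paper.hat A * MonoidAlgebra.of ℚ G u = Paper.hat A := by
  unfold Paper.hat
  rw [smul_mul_assoc, Finset.sum_mul]
  congr 1
  have : ∀ m : A, MonoidAlgebra.of ℚ G (m : G) * MonoidAlgebra.of ℚ G u
      = MonoidAlgebra.of ℚ G ((m * (⟨u, hu⟩ : A) : A) : G) := by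
    intro m; rw [← map_mul]; rfl
  rw [Finset.sum_congr rfl (fun m _ => this m)]
  exact Fintype.sum_equiv (Equiv.mulRight (⟨u, hu⟩ : A)) _ _ (fun m => rfl)

lemma of_mul_hat {A : Subgroup G} {u : G} (hu : u ∈ A) :
    MonoidAlgebra.of ℚ G u * Paper.hat A = Paper.hat A := by
  unfold Paper.hat
  rw [mul_smul_comm, Finset.mul_sum]
  congr 1
  have : ∀ m : A, MonoidAlgebra.of ℚ G u * MonoidAlgebra.of ℚ G (m : G)
      = MonoidAlgebra.of ℚ G (((⟨u, hu⟩ : A) * m : A) : G) := by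
    intro m; rw [← map_mul]; rfl
  rw [Finset.sum_congr rfl (fun m _ => this m)]
  exact Fintype.sum_equiv (Equiv.mulLeft (⟨u, hu⟩ : A)) _ _ (fun m => rfl)

lemma hat_mul_hat_right {A B : Subgroup G} (h : B ≤ A) :
    Paper.hat A * Paper.hat B = Paper.hat A := by
  conv_lhs => rw [show Paper.hat B
    = (Nat.card B : ℚ)⁻¹ • ∑ m : B, MonoidAlgebra.of ℚ G (m : G) from rfl]
  rw [mul_smul_comm, Finset.mul_sum]
  rw [Finset.sum_congr rfl (fun m _ => hat_mul_of (h m.2))]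
  rw [Finset.sum_const, Finset.card_univ, ← Nat.card_eq_fintype_card,
    ← Nat.cast_smul_eq_nsmul ℚ, smul_smul, inv_mul_cancel₀ (card_ne_zero B), one_smul]

lemma hat_mul_hat_left {A B : Subgroup G} (h : B ≤ A) :
    Paper.hat B * Paper.hat A = Paper.hat A := by
  conv_lhs => rw [show Paper.hat B
    = (Nat.card B : ℚ)⁻¹ • ∑ m : B, MonoidAlgebra.of ℚ G (m : G) from rfl]
  rw [smul_mul_assoc, Finset.sum_mul]
  rw [Finset.sum_congr rfl (fun m _ => of_mul_hat (h m.2))]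
  rw [Finset.sum_const, Finset.card_univ, ← Nat.card_eq_fintype_card,
    ← Nat.cast_smul_eq_nsmul ℚ, smul_smul, inv_mul_cancel₀ (card_ne_zero B), one_smul]

lemma conj_hat (g : G) (A : Subgroup G) :
    MonoidAlgebra.of ℚ G g⁻¹ * Paper.hat A * MonoidAlgebra.of ℚ G g
      = Paper.hat (A.map (MulAut.conj g⁻¹).toMonoidHom) := by
  unfold Paper.hat
  have hcard : Nat.card (A.map (MulAut.conj g⁻¹).toMonoidHom) = Nat.card A := by
    refine Nat.card_congr ?_
    exact (((MulAut.conj g⁻¹ : G ≃* G)).subgroupMap A).toEquiv.symm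
  rw [hcard, mul_smul_comm, smul_mul_assoc]
  congr 1
  rw [Finset.mul_sum, Finset.sum_mul]
  refine Fintype.sum_equiv (((MulAut.conj g⁻¹ : G ≃* G)).subgroupMap A).toEquiv _ _ ?_
  intro m
  rw [← map_mul, ← map_mul]
  congr 1
  show g⁻¹ * (m : G) * g = _
  have : ((((MulAut.conj g⁻¹ : G ≃* G)).subgroupMap A).toEquiv m : G)
      = (MulAut.conj g⁻¹) (m : G) := rfl
  rw [this, MulAut.conj_apply]
  group

lemma map_conj_eq {P : Subgroup G} (hPn : P.Normal) (g : G) :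
    P.map (MulAut.conj g).toMonoidHom = P := by
  apply le_antisymm
  · rintro w ⟨u, hu, rfl⟩
    exact hPn.conj_mem u hu g
  · intro w hw
    exact ⟨g⁻¹ * w * g, by simpa using hPn.conj_mem w hw g⁻¹, by
      show MulAut.conj g _ = w
      rw [MulAut.conj_apply]; group⟩

lemma of_hat_comm {K : Subgroup G} {v : G}
    (h1 : ∀ κ ∈ K, v * κ * v⁻¹ ∈ K) (h2 : ∀ κ ∈ K, v⁻¹ * κ * v ∈ K) :
    MonoidAlgebra.of ℚ G v * Paper.hat K = Paper.hat K * MonoidAlgebra.of ℚ G v := by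
  unfold Paper.hat
  rw [mul_smul_comm, smul_mul_assoc, Finset.mul_sum, Finset.sum_mul]
  congr 1
  refine Fintype.sum_equiv ⟨fun κ => ⟨v * κ * v⁻¹, h1 κ κ.2⟩,
    fun κ => ⟨v⁻¹ * κ * v, h2 κ κ.2⟩,
    fun κ => by ext; simp [mul_assoc],
    fun κ => by ext; simp [mul_assoc]⟩ _ _ ?_
  intro κ
  rw [← map_mul, ← map_mul]
  congr 1
  show v * (κ : G) = (v * (κ : G) * v⁻¹) * v
  group

end SSP

end Alg
section Grp

namespace SSP

set_option linter.unusedSectionVars false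

variable {G : Type*} [Group G]

open Subgroup

lemma conj_mem_closure {S : Set G} {H : Subgroup G} (g : G)
    (h : ∀ s ∈ S, g * s * g⁻¹ ∈ H) : ∀ w ∈ Subgroup.closure S, g * w * g⁻¹ ∈ H := by
  intro w hw
  induction hw using Subgroup.closure_induction with
  | mem s hs => exact h s hs
  | one => simpa using H.one_mem
  | mul u v hu hv ihu ihv =>
      have e : g * (u * v) * g⁻¹ = (g * u * g⁻¹) * (g * v * g⁻¹) := by group
      rw [e]; exact H.mul_mem ihu ihv
  | inv u hu ihu =>
      have e : g * u⁻¹ * g⁻¹ = (g * u * g⁻¹)⁻¹ := by group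
      rw [e]; exact H.inv_mem ihu

lemma commute_closure {S : Set G} {g : G} (h : ∀ s ∈ S, Commute g s) :
    ∀ w ∈ Subgroup.closure S, Commute g w := by
  intro w hw
  induction hw using Subgroup.closure_induction with
  | mem s hs => exact h s hs
  | one => exact Commute.one_right g
  | mul u v hu hv ihu ihv => exact ihu.mul_right ihv
  | inv u hu ihu => exact ihu.inv_right

lemma commute_closure_pair {S : Set G} (h : ∀ s ∈ S, ∀ t ∈ S, Commute s t) :
    ∀ v ∈ Subgroup.closure S, ∀ w ∈ Subgroup.closure S, Commute v w := by
  intro v hv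
  induction hv using Subgroup.closure_induction with
  | mem s hs => exact commute_closure (h s hs)
  | one => exact fun w _ => Commute.one_left w
  | mul u u' hu hu' ihu ihu' => exact fun w hw => (ihu w hw).mul_left (ihu' w hw)
  | inv u hu ihu => exact fun w hw => (ihu w hw).inv_left

lemma conj_self_of_commute {u v : G} (h : Commute u v) : u⁻¹ * v * u = v := by
  rw [mul_assoc, ← h.eq, inv_mul_cancel_left]

lemma conj_self_of_commute' {u v : G} (h : Commute u v) : u * v * u⁻¹ = v := by
  rw [mul_assoc, (h.symm.inv_right).eq, mul_inv_cancel_left]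

/-- from a relation `g⁻¹ * h⁻¹ * g * h = w` get `g⁻¹ * h * g = h * w⁻¹`. -/
lemma conj_of_rel {g h w : G} (rel : g⁻¹ * h⁻¹ * g * h = w) :
    g⁻¹ * h * g = h * w⁻¹ := by
  have h1 : g⁻¹ * h⁻¹ * g = w * h⁻¹ := by
    have := congrArg (· * h⁻¹) rel
    simpa [mul_assoc] using this
  have h2 : (g⁻¹ * h⁻¹ * g)⁻¹ = (w * h⁻¹)⁻¹ := congrArg (·⁻¹) h1
  have h3 : g⁻¹ * h * g = (w * h⁻¹)⁻¹ := by
    rw [← h2]; group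
  rw [h3]; rw [mul_inv_rev]; simp

lemma commute_of_rel {g h : G} (rel : g⁻¹ * h⁻¹ * g * h = 1) : Commute g h := by
  have h1 := conj_of_rel rel
  simp only [inv_one, mul_one] at h1
  have : g * (g⁻¹ * h * g) = g * h := congrArg (g * ·) h1
  exact (by simpa [mul_assoc] using this.symm : g * h = h * g)

/-- `g^m = g^(m % p)` when `g^p = 1`, `m : ℕ`. -/
lemma pow_eq_pow_mod_of {g : G} {p : ℕ} (hg : g ^ p = 1) (m : ℕ) :
    g ^ m = g ^ (m % p) := by
  conv_lhs => rw [← Nat.mod_add_div m p, pow_add, pow_mul, hg, one_pow, mul_one]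

/-- `g^s = g^((s % m).toNat)` for `s : ℤ` when `g^m = 1`, `0 < m`. -/
lemma zpow_eq_pow_emod {g : G} {m : ℕ} (hg : g ^ m = 1) (hm : 0 < m) (s : ℤ) :
    g ^ s = g ^ (s % (m : ℤ)).toNat := by
  have hm' : (m : ℤ) ≠ 0 := by exact_mod_cast hm.ne'
  have h0 : (0:ℤ) ≤ s % (m:ℤ) := Int.emod_nonneg s hm'
  conv_lhs => rw [← Int.emod_add_mul_ediv s (m : ℤ)]
  rw [zpow_add, zpow_mul, zpow_natCast, hg, one_zpow, mul_one]
  conv_lhs => rw [show s % (m:ℤ) = ((s % (m:ℤ)).toNat : ℤ) from (Int.toNat_of_nonneg h0).symm,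
    zpow_natCast]

lemma conj_pow_eq {a v : G} {q : ℕ} (h : a⁻¹ * v * a = v ^ q) :
    ∀ s : ℕ, (a ^ s)⁻¹ * v * a ^ s = v ^ q ^ s := by
  intro s
  induction s with
  | zero => simp
  | succ s ih =>
      have e1 : (a ^ (s+1))⁻¹ * v * a ^ (s+1)
          = a⁻¹ * ((a ^ s)⁻¹ * v * a ^ s) * a := by
        rw [pow_succ]; group
      have e2 : a⁻¹ * v ^ q ^ s * a = (a⁻¹ * v * a) ^ q ^ s := by
        have := (conj_pow (i := q ^ s) (a := a⁻¹) (b := v)).symm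
        simpa using this
      rw [e1, ih, e2, h, ← pow_mul]
      rw [← pow_succ']

end SSP

end Grp
section Rels

namespace SSP

set_option linter.unusedSectionVars false
set_option maxHeartbeats 1000000

variable {G : Type*} [Group G]

open Subgroup

lemma conj_swap {g w v : G} (h : g⁻¹ * w * g = v) : g * v * g⁻¹ = w := by
  rw [← h]; group

lemma pow_eq_self_of_modeq {g : G} {p m : ℕ} (hg : g ^ p = 1) (hm : m ≡ 1 [MOD p]) :
    g ^ m = g := by
  have hd : orderOf g ∣ p := orderOf_dvd_of_pow_eq_one hg
  have : m ≡ 1 [MOD orderOf g] := Nat.ModEq.of_dvd hd hm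
  calc g ^ m = g ^ 1 := (pow_eq_pow_iff_modEq).2 this
    _ = g := pow_one g

variable [Fintype G] (d : Paper.GData G)

lemma rel_kq : d.k * d.q ≡ 1 [MOD d.p] := by
  have := d.hkq
  rw [← Nat.cast_mul] at this
  have h1 : ((d.k * d.q : ℕ) : ZMod d.p) = ((1 : ℕ) : ZMod d.p) := by
    rw [this, Nat.cast_one]
  exact (ZMod.natCast_eq_natCast_iff _ _ _).1 h1

lemma rel_ax : Commute d.a d.x := commute_of_rel d.hax

lemma rel_xy (i : Fin d.r) : Commute d.x (d.y i) := commute_of_rel (d.hxy i)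

lemma rel_xz (i : Fin d.r) : Commute d.x (d.z i) := commute_of_rel (d.hxz i)

lemma rel_yy (i j : Fin d.r) : Commute (d.y i) (d.y j) := commute_of_rel (d.hyy i j)

lemma rel_zz (i j : Fin d.r) : Commute (d.z i) (d.z j) := commute_of_rel (d.hzz i j)

lemma rel_yz' (i j : Fin d.r) (hij : i ≠ j) : Commute (d.y i) (d.z j) :=
  commute_of_rel (d.hyz' i j hij)

lemma rel_ay (i : Fin d.r) : d.a⁻¹ * d.y i * d.a = d.y i ^ d.k := by
  have h1 := conj_of_rel (d.hay i)
  rw [h1]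
  calc d.y i * (d.y i ^ ((1:ℤ) - d.k))⁻¹
      = d.y i ^ (1:ℤ) * d.y i ^ (-((1:ℤ) - d.k)) := by rw [zpow_one, zpow_neg]
    _ = d.y i ^ ((1:ℤ) + -((1:ℤ) - d.k)) := (zpow_add _ _ _).symm
    _ = d.y i ^ ((d.k : ℤ)) := by norm_num
    _ = d.y i ^ d.k := zpow_natCast _ _

lemma rel_az (i : Fin d.r) : d.a⁻¹ * d.z i * d.a = d.z i ^ d.q := by
  have h1 := conj_of_rel (d.haz i)
  rw [h1]
  calc d.z i * (d.z i ^ ((1:ℤ) - d.q))⁻¹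
      = d.z i ^ (1:ℤ) * d.z i ^ (-((1:ℤ) - d.q)) := by rw [zpow_one, zpow_neg]
    _ = d.z i ^ ((1:ℤ) + -((1:ℤ) - d.q)) := (zpow_add _ _ _).symm
    _ = d.z i ^ ((d.q : ℤ)) := by norm_num
    _ = d.z i ^ d.q := zpow_natCast _ _

lemma rel_ay' (i : Fin d.r) : d.a * d.y i * d.a⁻¹ = d.y i ^ d.q := by
  refine conj_swap ?_
  have h1 : d.a⁻¹ * d.y i ^ d.q * d.a = (d.a⁻¹ * d.y i * d.a) ^ d.q := by
    have := (conj_pow (i := d.q) (a := d.a⁻¹) (b := d.y i)).symm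
    simpa using this
  rw [h1, rel_ay d, ← pow_mul]
  exact pow_eq_self_of_modeq (d.hyp i) (rel_kq d)

lemma rel_az' (i : Fin d.r) : d.a * d.z i * d.a⁻¹ = d.z i ^ d.k := by
  refine conj_swap ?_
  have h1 : d.a⁻¹ * d.z i ^ d.k * d.a = (d.a⁻¹ * d.z i * d.a) ^ d.k := by
    have := (conj_pow (i := d.k) (a := d.a⁻¹) (b := d.z i)).symm
    simpa using this
  rw [h1, rel_az d, ← pow_mul]
  refine pow_eq_self_of_modeq (d.hzp i) ?_
  have := rel_kq d
  rwa [Nat.mul_comm] at this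

lemma rel_binv : d.b⁻¹ = d.b := by
  have h : d.b * d.b = 1 := by rw [← pow_two]; exact d.hb2
  exact inv_eq_of_mul_eq_one_right h

lemma rel_bx : d.b⁻¹ * d.x * d.b = d.x⁻¹ := by
  have h1 := conj_of_rel d.hbx
  rw [h1]
  group

lemma rel_by (i : Fin d.r) : d.b⁻¹ * d.y i * d.b = (d.z i)⁻¹ := by
  have h1 := conj_of_rel (d.hby i)
  rw [h1]
  group

lemma rel_bz (i : Fin d.r) : d.b⁻¹ * d.z i * d.b = (d.y i)⁻¹ := by
  have h1 := conj_of_rel (d.hbz i)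
  rw [h1]
  group

lemma rel_ba : d.b⁻¹ * d.a * d.b = d.a⁻¹ := by
  have h1 := conj_of_rel d.hba
  rw [h1]
  group

/-- `z⁻¹ y z = y x` -/
lemma rel_zyz (i : Fin d.r) : (d.z i)⁻¹ * d.y i * d.z i = d.y i * d.x := by
  have e : d.y i * ((d.y i)⁻¹ * (d.z i)⁻¹ * d.y i * d.z i) = (d.z i)⁻¹ * d.y i * d.z i := by
    group
  rw [← e, d.hyz i]

/-- `z y z⁻¹ = y x⁻¹` -/
lemma rel_zyz' (i : Fin d.r) : d.z i * d.y i * (d.z i)⁻¹ = d.y i * d.x⁻¹ := by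
  have h1 : d.z i * (d.y i * d.x) * (d.z i)⁻¹ = d.y i := conj_swap (rel_zyz d i)
  have e : d.z i * (d.y i * d.x) * (d.z i)⁻¹
      = (d.z i * d.y i * (d.z i)⁻¹) * (d.z i * d.x * (d.z i)⁻¹) := by group
  have hx : d.z i * d.x * (d.z i)⁻¹ = d.x := by
    have := (rel_xz d i).symm.eq
    rw [this]; group
  rw [e, hx] at h1
  have := congrArg (· * d.x⁻¹) h1
  simpa [mul_assoc] using this

/-- `y⁻¹ z y = z x⁻¹` -/
lemma rel_yzy (i : Fin d.r) : (d.y i)⁻¹ * d.z i * d.y i = d.z i * d.x⁻¹ :=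
  conj_of_rel (d.hyz i)

/-- `y z y⁻¹ = z x` -/
lemma rel_yzy' (i : Fin d.r) : d.y i * d.z i * (d.y i)⁻¹ = d.z i * d.x := by
  have h1 : d.y i * (d.z i * d.x⁻¹) * (d.y i)⁻¹ = d.z i := conj_swap (rel_yzy d i)
  have e : d.y i * (d.z i * d.x⁻¹) * (d.y i)⁻¹
      = (d.y i * d.z i * (d.y i)⁻¹) * (d.y i * d.x⁻¹ * (d.y i)⁻¹) := by group
  have hx : d.y i * d.x⁻¹ * (d.y i)⁻¹ = d.x⁻¹ := by
    have hc : Commute d.x⁻¹ (d.y i) := (rel_xy d i).inv_left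
    rw [hc.symm.eq]; group
  rw [e, hx] at h1
  have := congrArg (· * d.x) h1
  simpa [mul_assoc] using this

lemma orderOf_q : orderOf ((d.q : ZMod d.p)) = 2 ^ (d.n - 1) := by
  rw [← d.hordk]
  have key : ∀ m : ℕ, (d.q : ZMod d.p) ^ m = 1 ↔ (d.k : ZMod d.p) ^ m = 1 := by
    intro m
    have hkq : ((d.k : ZMod d.p) * d.q) ^ m = 1 := by rw [d.hkq, one_pow]
    rw [mul_pow] at hkq
    constructor
    · intro h; rw [h, mul_one] at hkq; exact hkq
    · intro h; rw [h, one_mul] at hkq; exact hkq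
  exact orderOf_eq_orderOf_iff.2 key

end SSP

end Rels
section Struct

namespace SSP

set_option linter.unusedSectionVars false
set_option maxHeartbeats 1000000

variable {G : Type*} [Group G]

open Subgroup

lemma mem_normalizer_of_conj {S : Set G} (g : G)
    (h1 : ∀ s ∈ S, g * s * g⁻¹ ∈ Subgroup.closure S)
    (h2 : ∀ s ∈ S, g⁻¹ * s * g ∈ Subgroup.closure S) :
    g ∈ (Subgroup.normalizer ((Subgroup.closure S : Subgroup G) : Set G)) := by
  rw [Subgroup.mem_normalizer_iff]
  intro h
  constructor
  · intro hh; exact conj_mem_closure g h1 h hh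
  · intro hh
    have h2' : ∀ s ∈ S, g⁻¹ * s * g⁻¹⁻¹ ∈ Subgroup.closure S := by simpa using h2
    have h3 := conj_mem_closure g⁻¹ h2' _ hh
    have e : g⁻¹ * (g * h * g⁻¹) * g⁻¹⁻¹ = h := by group
    rwa [e] at h3

variable [Fintype G] (d : Paper.GData G)

lemma x_mem_P : d.x ∈ d.P :=
  Subgroup.subset_closure (Set.mem_union_left _ (Set.mem_union_left _ rfl))

lemma y_mem_P (i : Fin d.r) : d.y i ∈ d.P :=
  Subgroup.subset_closure (Set.mem_union_left _ (Set.mem_union_right _ ⟨i, rfl⟩))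

lemma z_mem_P (i : Fin d.r) : d.z i ∈ d.P :=
  Subgroup.subset_closure (Set.mem_union_right _ ⟨i, rfl⟩)

lemma a_mem_normalizer_P : d.a ∈ (Subgroup.normalizer (d.P : Set G)) := by
  show d.a ∈ (Subgroup.normalizer ((Subgroup.closure (({d.x} : Set G) ∪ Set.range d.y ∪ Set.range d.z) : Subgroup G) : Set G))
  apply mem_normalizer_of_conj
  · intro s hs
    simp only [Set.mem_union, Set.mem_singleton_iff, Set.mem_range] at hs
    rcases hs with (rfl | ⟨i, rfl⟩) | ⟨i, rfl⟩
    · have e : d.a * d.x * d.a⁻¹ = d.x := by rw [(rel_ax d).eq]; group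
      rw [e]; exact x_mem_P d
    · rw [rel_ay' d i]; exact pow_mem (y_mem_P d i) _
    · rw [rel_az' d i]; exact pow_mem (z_mem_P d i) _
  · intro s hs
    simp only [Set.mem_union, Set.mem_singleton_iff, Set.mem_range] at hs
    rcases hs with (rfl | ⟨i, rfl⟩) | ⟨i, rfl⟩
    · have e : d.a⁻¹ * d.x * d.a = d.x := by
        have h := (rel_ax d).eq
        have := congrArg (fun w => d.a⁻¹ * w * d.a⁻¹ * d.a) h
        simpa [mul_assoc] using this.symm
      rw [e]; exact x_mem_P d
    · rw [rel_ay d i]; exact pow_mem (y_mem_P d i) _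
    · rw [rel_az d i]; exact pow_mem (z_mem_P d i) _

lemma b_mem_normalizer_P : d.b ∈ (Subgroup.normalizer (d.P : Set G)) := by
  have hb := rel_binv d
  have key : ∀ s ∈ (({d.x} : Set G) ∪ Set.range d.y ∪ Set.range d.z),
      d.b⁻¹ * s * d.b ∈ Subgroup.closure (({d.x} : Set G) ∪ Set.range d.y ∪ Set.range d.z) := by
    intro s hs
    simp only [Set.mem_union, Set.mem_singleton_iff, Set.mem_range] at hs
    rcases hs with (rfl | ⟨i, rfl⟩) | ⟨i, rfl⟩
    · rw [rel_bx d]; exact inv_mem (x_mem_P d)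
    · rw [rel_by d i]; exact inv_mem (z_mem_P d i)
    · rw [rel_bz d i]; exact inv_mem (y_mem_P d i)
  show d.b ∈ (Subgroup.normalizer ((Subgroup.closure (({d.x} : Set G) ∪ Set.range d.y ∪ Set.range d.z) : Subgroup G) : Set G))
  apply mem_normalizer_of_conj
  · intro s hs
    have h3 := key s hs
    rw [hb] at h3
    rwa [show d.b * s * d.b⁻¹ = d.b * s * d.b by rw [hb]]
  · intro s hs
    exact key s hs

lemma P_normal : d.P.Normal := by
  rw [← Subgroup.normalizer_eq_top_iff]
  apply top_unique
  rw [← d.hgen]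
  rw [Subgroup.closure_le]
  intro g hg
  simp only [Set.mem_union, Set.mem_insert_iff, Set.mem_singleton_iff, Set.mem_range] at hg
  rcases hg with ((rfl | rfl | rfl) | ⟨i, rfl⟩) | ⟨i, rfl⟩
  · exact Subgroup.le_normalizer (x_mem_P d)
  · exact a_mem_normalizer_P d
  · exact b_mem_normalizer_P d
  · exact Subgroup.le_normalizer (y_mem_P d i)
  · exact Subgroup.le_normalizer (z_mem_P d i)

lemma rel_ba2' : d.a * d.b = d.b * d.a⁻¹ := by
  have := congrArg (d.b * ·) (rel_ba d)
  simpa [mul_assoc] using this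

lemma rel_ba2 : d.b * d.a = d.a⁻¹ * d.b := by
  have h2 := rel_ba2' d
  have e := congrArg (· * d.a) h2
  simp only [mul_assoc, inv_mul_cancel, mul_one] at e
  have e2 := congrArg (d.a⁻¹ * ·) e
  rw [inv_mul_cancel_left] at e2
  exact e2

lemma G_decomp (g : G) :
    ∃ w ∈ d.P, ∃ s : ℤ, ∃ t : Bool, g = w * d.a ^ s * (cond t d.b 1) := by
  have Pn := P_normal d
  have htop : g ∈ d.P ⊔ Subgroup.closure ({d.a, d.b} : Set G) := by
    have hle : (⊤ : Subgroup G) ≤ d.P ⊔ Subgroup.closure ({d.a, d.b} : Set G) := by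
      rw [← d.hgen, Subgroup.closure_le]
      intro g' hg'
      simp only [Set.mem_union, Set.mem_insert_iff, Set.mem_singleton_iff, Set.mem_range] at hg'
      rcases hg' with ((rfl | rfl | rfl) | ⟨i, rfl⟩) | ⟨i, rfl⟩
      · exact Subgroup.mem_sup_left (x_mem_P d)
      · exact Subgroup.mem_sup_right (Subgroup.subset_closure (Or.inl rfl))
      · exact Subgroup.mem_sup_right (Subgroup.subset_closure (Or.inr rfl))
      · exact Subgroup.mem_sup_left (y_mem_P d i)
      · exact Subgroup.mem_sup_left (z_mem_P d i)
    exact hle trivial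
  rw [← Subgroup.closure_eq d.P, ← Subgroup.closure_union] at htop
  induction htop using Subgroup.closure_induction_right with
  | one => exact ⟨1, one_mem _, 0, false, by simp⟩
  | mul_right x' hx' v hv ih =>
      obtain ⟨w, hw, s, t, rfl⟩ := ih
      simp only [Set.mem_union, Set.mem_insert_iff, Set.mem_singleton_iff, SetLike.mem_coe] at hv
      rcases hv with hvP | rfl | rfl
      · refine ⟨w * (d.a ^ s * ((cond t d.b 1) * v * (cond t d.b 1)⁻¹) * (d.a ^ s)⁻¹),
          ?_, s, t, ?_⟩
        · refine mul_mem hw (Pn.conj_mem _ ?_ _)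
          cases t
          · simpa using hvP
          · exact Pn.conj_mem _ hvP _
        · group
      · cases t
        · refine ⟨w, hw, s + 1, false, ?_⟩
          simp only [Bool.cond_false]
          group
        · refine ⟨w, hw, s - 1, true, ?_⟩
          simp only [Bool.cond_true]
          have e : w * d.a ^ s * d.b * d.a = w * d.a ^ s * (d.b * d.a) := by group
          rw [e, rel_ba2 d]
          group
      · cases t
        · refine ⟨w, hw, s, true, ?_⟩
          simp only [Bool.cond_false, Bool.cond_true]
          group
        · refine ⟨w, hw, s, false, ?_⟩
          simp only [Bool.cond_false, Bool.cond_true]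
          have e : w * d.a ^ s * d.b * d.b = w * d.a ^ s * (d.b * d.b) := by group
          have e2 : d.b * d.b = 1 := by rw [← pow_two]; exact d.hb2
          rw [e, e2, mul_one]
  | mul_inv_cancel x' hx' v hv ih =>
      obtain ⟨w, hw, s, t, rfl⟩ := ih
      simp only [Set.mem_union, Set.mem_insert_iff, Set.mem_singleton_iff, SetLike.mem_coe] at hv
      rcases hv with hvP | rfl | rfl
      · refine ⟨w * (d.a ^ s * ((cond t d.b 1) * v⁻¹ * (cond t d.b 1)⁻¹) * (d.a ^ s)⁻¹),
          ?_, s, t, ?_⟩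
        · refine mul_mem hw (Pn.conj_mem _ ?_ _)
          cases t
          · simpa using inv_mem hvP
          · exact Pn.conj_mem _ (inv_mem hvP) _
        · group
      · cases t
        · refine ⟨w, hw, s - 1, false, ?_⟩
          simp only [Bool.cond_false]
          group
        · refine ⟨w, hw, s + 1, true, ?_⟩
          simp only [Bool.cond_true]
          have e : w * d.a ^ s * d.b * d.a⁻¹ = w * d.a ^ s * (d.b * d.a⁻¹) := by group
          rw [e, ← rel_ba2' d]
          group
      · rw [rel_binv d]
        cases t
        · refine ⟨w, hw, s, true, ?_⟩
          simp only [Bool.cond_false, Bool.cond_true]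
          group
        · refine ⟨w, hw, s, false, ?_⟩
          simp only [Bool.cond_false, Bool.cond_true]
          have e : w * d.a ^ s * d.b * d.b = w * d.a ^ s * (d.b * d.b) := by group
          have e2 : d.b * d.b = 1 := by rw [← pow_two]; exact d.hb2
          rw [e, e2, mul_one]

lemma mem_P_sup_a {g : G} (hg : g ∈ d.P ⊔ Subgroup.closure ({d.a} : Set G)) :
    ∃ w ∈ d.P, ∃ s : ℤ, g = w * d.a ^ s := by
  have Pn := P_normal d
  rw [← Subgroup.closure_eq d.P, ← Subgroup.closure_union] at hg
  induction hg using Subgroup.closure_induction_right with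
  | one => exact ⟨1, one_mem _, 0, by simp⟩
  | mul_right x' hx' v hv ih =>
      obtain ⟨w, hw, s, rfl⟩ := ih
      simp only [Set.mem_union, Set.mem_singleton_iff, SetLike.mem_coe] at hv
      rcases hv with hvP | rfl
      · exact ⟨w * (d.a ^ s * v * (d.a ^ s)⁻¹), mul_mem hw (Pn.conj_mem _ hvP _), s, by group⟩
      · exact ⟨w, hw, s + 1, by group⟩
  | mul_inv_cancel x' hx' v hv ih =>
      obtain ⟨w, hw, s, rfl⟩ := ih
      simp only [Set.mem_union, Set.mem_singleton_iff, SetLike.mem_coe] at hv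
      rcases hv with hvP | rfl
      · exact ⟨w * (d.a ^ s * v⁻¹ * (d.a ^ s)⁻¹),
          mul_mem hw (Pn.conj_mem _ (inv_mem hvP) _), s, by group⟩
      · exact ⟨w, hw, s - 1, by group⟩

end SSP

end Struct
section Bez

namespace SSP

lemma bezout_prime {p : ℕ} (hp : p.Prime) {m : ℤ} (h : ¬ (p:ℤ) ∣ m) :
    ∃ u v : ℤ, 1 = m * u + (p:ℤ) * v := by
  have hg : Int.gcd m (p:ℤ) = 1 := by
    have h2 : Int.gcd m (p:ℤ) ∣ p := by
      have h1 : (Int.gcd m (p:ℤ) : ℤ) ∣ (p:ℤ) := Int.gcd_dvd_right _ _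
      exact_mod_cast h1
    rcases hp.eq_one_or_self_of_dvd _ h2 with h1 | h1
    · exact h1
    · exfalso
      apply h
      have h3 : (Int.gcd m (p:ℤ) : ℤ) ∣ m := Int.gcd_dvd_left _ _
      rw [h1] at h3
      exact_mod_cast h3
  refine ⟨Int.gcdA m (p:ℤ), Int.gcdB m (p:ℤ), ?_⟩
  have := Int.gcd_eq_gcd_ab m (p:ℤ)
  rwa [hg, Nat.cast_one] at this

end SSP

end Bez
section Main

namespace SSP

set_option linter.unusedSectionVars false
set_option maxHeartbeats 2000000

open Subgroup

variable {G : Type*} [Group G] [Fintype G]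

lemma main (d : Paper.GData G)
    (K : Subgroup G) (hKP : K ≤ d.P) (hKnormal : Paper.NormalIn d.P K) (hKne : K ≠ d.P)
    (hcyc : Paper.CyclicQuot d.P K)
    (yy zz : Fin d.r → G) (kk qq : ℕ)
    (hsetP : d.P = Subgroup.closure ((({d.x} : Set G) ∪ Set.range yy) ∪ Set.range zz))
    (hYK : Subgroup.closure (({d.x} : Set G) ∪ Set.range yy) ≤ K)
    (hay1 : ∀ i, d.a⁻¹ * yy i * d.a = yy i ^ kk)
    (hay2 : ∀ i, d.a * yy i * d.a⁻¹ = yy i ^ qq)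
    (haz1 : ∀ i, d.a⁻¹ * zz i * d.a = zz i ^ qq)
    (haz2 : ∀ i, d.a * zz i * d.a⁻¹ = zz i ^ kk)
    (hxzz : ∀ j, Commute (zz j) d.x)
    (hzy1 : ∀ j i, zz j * yy i * (zz j)⁻¹ ∈ Subgroup.closure (({d.x} : Set G) ∪ Set.range yy))
    (hzy2 : ∀ j i, (zz j)⁻¹ * yy i * zz j ∈ Subgroup.closure (({d.x} : Set G) ∪ Set.range yy))
    (hzzc : ∀ i j, Commute (zz i) (zz j))
    (hzzp : ∀ i, zz i ^ d.p = 1)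
    (hbzz : ∀ i, d.b⁻¹ * zz i * d.b = (yy i)⁻¹)
    (hqq : orderOf ((qq : ZMod d.p)) = 2 ^ (d.n - 1)) :
    (Subgroup.normalizer (K : Set G)) = d.P ⊔ Subgroup.closure {d.a} ∧ Paper.IsStrongShodaPair d.P K := by
  classical
  obtain ⟨h0, h0P, h0spec⟩ := id hcyc
  set YS : Set G := ({d.x} : Set G) ∪ Set.range yy with hYS
  set ZS : Set G := Set.range zz with hZS
  have Pn : d.P.Normal := P_normal d
  -- basic memberships
  have hxK : d.x ∈ K := hYK (Subgroup.subset_closure (Set.mem_union_left _ rfl))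
  have hyyK : ∀ i, yy i ∈ K :=
    fun i => hYK (Subgroup.subset_closure (Set.mem_union_right _ ⟨i, rfl⟩))
  have hzzP : ∀ i, zz i ∈ d.P := by
    intro i
    rw [hsetP]
    exact Subgroup.subset_closure (Set.mem_union_right _ ⟨i, rfl⟩)
  have hYP : Subgroup.closure YS ≤ d.P := by
    rw [hsetP]
    exact Subgroup.closure_mono Set.subset_union_left
  have hZP : Subgroup.closure ZS ≤ d.P := by
    rw [hsetP]
    exact Subgroup.closure_mono Set.subset_union_right
  -- Z facts
  have Zcomm : ∀ v ∈ Subgroup.closure ZS, ∀ w ∈ Subgroup.closure ZS, Commute v w := by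
    refine commute_closure_pair ?_
    rintro s ⟨i, rfl⟩ t ⟨j, rfl⟩
    exact hzzc i j
  have Zpow : ∀ v ∈ Subgroup.closure ZS, v ^ d.p = 1 := by
    intro v hv
    induction hv using Subgroup.closure_induction with
    | mem s hs => obtain ⟨i, rfl⟩ := hs; exact hzzp i
    | one => exact one_pow _
    | mul u w hu hw ihu ihw => rw [(Zcomm u hu w hw).mul_pow, ihu, ihw, mul_one]
    | inv u hu ihu => rw [inv_pow, ihu, inv_one]
  have Zconj1 : ∀ v ∈ Subgroup.closure ZS, d.a⁻¹ * v * d.a = v ^ qq := by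
    intro v hv
    induction hv using Subgroup.closure_induction with
    | mem s hs => obtain ⟨i, rfl⟩ := hs; exact haz1 i
    | one => simp
    | mul u w hu hw ihu ihw =>
        have e : d.a⁻¹ * (u * w) * d.a = (d.a⁻¹ * u * d.a) * (d.a⁻¹ * w * d.a) := by group
        rw [e, ihu, ihw, ← (Zcomm u hu w hw).mul_pow]
    | inv u hu ihu =>
        have e : d.a⁻¹ * u⁻¹ * d.a = (d.a⁻¹ * u * d.a)⁻¹ := by group
        rw [e, ihu, ← inv_pow]
  have Zconj2 : ∀ v ∈ Subgroup.closure ZS, d.a * v * d.a⁻¹ = v ^ kk := by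
    intro v hv
    induction hv using Subgroup.closure_induction with
    | mem s hs => obtain ⟨i, rfl⟩ := hs; exact haz2 i
    | one => simp
    | mul u w hu hw ihu ihw =>
        have e : d.a * (u * w) * d.a⁻¹ = (d.a * u * d.a⁻¹) * (d.a * w * d.a⁻¹) := by group
        rw [e, ihu, ihw, ← (Zcomm u hu w hw).mul_pow]
    | inv u hu ihu =>
        have e : d.a * u⁻¹ * d.a⁻¹ = (d.a * u * d.a⁻¹)⁻¹ := by group
        rw [e, ihu, ← inv_pow]
  -- Z normalizes Y
  have hZN : Subgroup.closure ZS ≤ (Subgroup.normalizer ((Subgroup.closure YS : Subgroup G) : Set G)) := by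
    rw [Subgroup.closure_le]
    rintro s ⟨j, rfl⟩
    apply mem_normalizer_of_conj
    · intro s' hs'
      rcases hs' with h | ⟨i, rfl⟩
      · rw [Set.mem_singleton_iff] at h
        subst h
        rw [conj_self_of_commute' (hxzz j)]
        exact Subgroup.subset_closure (Set.mem_union_left _ rfl)
      · exact hzy1 j i
    · intro s' hs'
      rcases hs' with h | ⟨i, rfl⟩
      · rw [Set.mem_singleton_iff] at h
        subst h
        rw [conj_self_of_commute (hxzz j)]
        exact Subgroup.subset_closure (Set.mem_union_left _ rfl)
      · exact hzy2 j i
  have Znorm : ∀ g ∈ Subgroup.closure ZS, ∀ u ∈ Subgroup.closure YS,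
      g * u * g⁻¹ ∈ Subgroup.closure YS ∧ g⁻¹ * u * g ∈ Subgroup.closure YS := by
    intro g hg u hu
    constructor
    · exact (Subgroup.mem_normalizer_iff.1 (hZN hg) u).1 hu
    · have := (Subgroup.mem_normalizer_iff.1 (hZN (inv_mem hg)) u).1 hu
      simpa using this
  -- Y is a-invariant
  have Yconj_a1 : ∀ u ∈ Subgroup.closure YS, d.a⁻¹ * u * d.a ∈ Subgroup.closure YS := by
    intro u hu
    have h' : ∀ s ∈ YS, d.a⁻¹ * s * d.a⁻¹⁻¹ ∈ Subgroup.closure YS := by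
      intro s hs
      rw [inv_inv]
      rcases hs with h | ⟨i, rfl⟩
      · rw [Set.mem_singleton_iff] at h
        subst h
        rw [conj_self_of_commute (rel_ax d)]
        exact Subgroup.subset_closure (Set.mem_union_left _ rfl)
      · rw [hay1 i]
        have hmem : yy i ∈ Subgroup.closure YS :=
          Subgroup.subset_closure (Set.mem_union_right _ ⟨i, rfl⟩)
        exact pow_mem hmem _
    have := conj_mem_closure d.a⁻¹ h' u hu
    simpa using this
  have Yconj_a2 : ∀ u ∈ Subgroup.closure YS, d.a * u * d.a⁻¹ ∈ Subgroup.closure YS := by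
    intro u hu
    have h' : ∀ s ∈ YS, d.a * s * d.a⁻¹ ∈ Subgroup.closure YS := by
      intro s hs
      rcases hs with h | ⟨i, rfl⟩
      · rw [Set.mem_singleton_iff] at h
        subst h
        rw [conj_self_of_commute' (rel_ax d)]
        exact Subgroup.subset_closure (Set.mem_union_left _ rfl)
      · rw [hay2 i]
        have hmem : yy i ∈ Subgroup.closure YS :=
          Subgroup.subset_closure (Set.mem_union_right _ ⟨i, rfl⟩)
        exact pow_mem hmem _
    exact conj_mem_closure d.a h' u hu
  -- decomposition P = Z * Y
  have decomp : ∀ w ∈ d.P, ∃ v ∈ Subgroup.closure ZS, ∃ u ∈ Subgroup.closure YS, w = v * u := by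
    intro w hw
    rw [hsetP] at hw
    induction hw using Subgroup.closure_induction with
    | mem s hs =>
        rcases hs with hY | hZ
        · exact ⟨1, one_mem _, s, Subgroup.subset_closure hY, (one_mul s).symm⟩
        · exact ⟨s, Subgroup.subset_closure hZ, 1, one_mem _, (mul_one s).symm⟩
    | one => exact ⟨1, one_mem _, 1, one_mem _, by simp⟩
    | mul u w' hu hw' ihu ihw' =>
        obtain ⟨v1, hv1, u1, hu1, rfl⟩ := ihu
        obtain ⟨v2, hv2, u2, hu2, rfl⟩ := ihw'
        refine ⟨v1 * v2, mul_mem hv1 hv2, (v2⁻¹ * u1 * v2) * u2,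
          mul_mem (Znorm v2 hv2 u1 hu1).2 hu2, by group⟩
    | inv u hu ihu =>
        obtain ⟨v1, hv1, u1, hu1, rfl⟩ := ihu
        refine ⟨v1⁻¹, inv_mem hv1, v1 * u1⁻¹ * v1⁻¹,
          (Znorm v1 hv1 u1⁻¹ (inv_mem hu1)).1, by group⟩
  -- product powers
  have prodpow : ∀ v ∈ d.P, ∀ u ∈ K, ∀ m : ℕ, ∃ κ ∈ K, (v * u) ^ m = v ^ m * κ := by
    intro v hv u hu m
    induction m with
    | zero => exact ⟨1, one_mem K, by simp⟩
    | succ m ih =>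
        obtain ⟨κ, hκ, he⟩ := ih
        refine ⟨(v⁻¹ * κ * v) * u, mul_mem (hKnormal v hv κ hκ) hu, ?_⟩
        rw [pow_succ, he, pow_succ]
        group
  have prodzpow : ∀ v ∈ d.P, ∀ u ∈ K, ∀ m : ℤ, ∃ κ ∈ K, (v * u) ^ m = v ^ m * κ := by
    intro v hv u hu m
    cases m with
    | ofNat n =>
        obtain ⟨κ, hκ, he⟩ := prodpow v hv u hu n
        exact ⟨κ, hκ, by rw [Int.ofNat_eq_coe, zpow_natCast, zpow_natCast, he]⟩
    | negSucc n =>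
        obtain ⟨κ, hκ, he⟩ := prodpow v hv u hu (n + 1)
        refine ⟨v ^ (n + 1) * κ⁻¹ * (v ^ (n + 1))⁻¹, ?_, ?_⟩
        · have := hKnormal (v ^ (n + 1))⁻¹ (inv_mem (pow_mem hv _)) κ⁻¹ (inv_mem hκ)
          simpa using this
        · rw [zpow_negSucc, he, zpow_negSucc]
          group
  -- exponent p
  have powp : ∀ w ∈ d.P, w ^ d.p ∈ K := by
    intro w hw
    obtain ⟨v, hv, u, hu, rfl⟩ := decomp w hw
    obtain ⟨κ, hκ, he⟩ := prodpow v (hZP hv) u (hYK hu) d.p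
    rw [he, Zpow v hv, one_mul]
    exact hκ
  -- commutators into K
  have commK : ∀ h₁ ∈ d.P, ∀ h₂ ∈ d.P, h₁⁻¹ * h₂⁻¹ * h₁ * h₂ ∈ K := by
    intro h₁ hh₁ h₂ hh₂
    obtain ⟨v1, hv1, u1, hu1, rfl⟩ := decomp _ hh₁
    obtain ⟨v2, hv2, u2, hu2, rfl⟩ := decomp _ hh₂
    have hc12 : Commute v1 v2 := Zcomm v1 hv1 v2 hv2
    have ha : (v1 * u1) * (v2 * u2) = (v1 * v2) * ((v2⁻¹ * u1 * v2) * u2) := by group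
    have hb : (v2 * u2) * (v1 * u1) = (v1 * v2) * ((v1⁻¹ * u2 * v1) * u1) := by
      rw [hc12.eq]; group
    have hκa : (v2⁻¹ * u1 * v2) * u2 ∈ K :=
      mul_mem (hYK (Znorm v2 hv2 u1 hu1).2) (hYK hu2)
    have hκb : (v1⁻¹ * u2 * v1) * u1 ∈ K :=
      mul_mem (hYK (Znorm v1 hv1 u2 hu2).2) (hYK hu1)
    have e : (v1 * u1)⁻¹ * (v2 * u2)⁻¹ * (v1 * u1) * (v2 * u2)
        = ((v2 * u2) * (v1 * u1))⁻¹ * ((v1 * u1) * (v2 * u2)) := by group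
    rw [e, ha, hb]
    have e2 : ((v1 * v2) * ((v1⁻¹ * u2 * v1) * u1))⁻¹ * ((v1 * v2) * ((v2⁻¹ * u1 * v2) * u2))
        = ((v1⁻¹ * u2 * v1) * u1)⁻¹ * ((v2⁻¹ * u1 * v2) * u2) := by group
    rw [e2]
    exact mul_mem (inv_mem hκb) hκa
  -- power criterion
  have tK : ∀ t' ∈ d.P, t' ∉ K → ∀ m : ℤ, (t' ^ m ∈ K ↔ (d.p : ℤ) ∣ m) := by
    intro t' ht'P ht'K m
    constructor
    · intro hm
      by_contra hdvd
      obtain ⟨u, v, huv⟩ := bezout_prime d.hp hdvd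
      apply ht'K
      have e : t' = t' ^ (m * u + (d.p : ℤ) * v) := by rw [← huv, zpow_one]
      rw [e, zpow_add, zpow_mul, zpow_mul]
      refine mul_mem (zpow_mem hm _) (zpow_mem ?_ _)
      rw [zpow_natCast]
      exact powp t' ht'P
    · rintro ⟨c, rfl⟩
      rw [zpow_mul, zpow_natCast]
      exact zpow_mem (powp t' ht'P) c
  -- P normalizes K
  have PnormK : d.P ≤ (Subgroup.normalizer (K : Set G)) := by
    intro w hw
    rw [Subgroup.mem_normalizer_iff'']
    intro h
    constructor
    · intro hh
      exact hKnormal w hw h hh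
    · intro hh
      have := hKnormal w⁻¹ (inv_mem hw) _ hh
      simpa [mul_assoc] using this
  -- a normalizes K
  have aK1 : ∀ h ∈ K, d.a⁻¹ * h * d.a ∈ K := by
    intro h hh
    obtain ⟨v, hv, u, hu, rfl⟩ := decomp _ (hKP hh)
    have huK : u ∈ K := hYK hu
    have hvK : v ∈ K := by
      have := mul_mem hh (inv_mem huK)
      simpa [mul_assoc] using this
    have e : d.a⁻¹ * (v * u) * d.a = (d.a⁻¹ * v * d.a) * (d.a⁻¹ * u * d.a) := by group
    rw [e, Zconj1 v hv]
    exact mul_mem (pow_mem hvK _) (hYK (Yconj_a1 u hu))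
  have aK2 : ∀ h ∈ K, d.a * h * d.a⁻¹ ∈ K := by
    intro h hh
    obtain ⟨v, hv, u, hu, rfl⟩ := decomp _ (hKP hh)
    have huK : u ∈ K := hYK hu
    have hvK : v ∈ K := by
      have := mul_mem hh (inv_mem huK)
      simpa [mul_assoc] using this
    have e : d.a * (v * u) * d.a⁻¹ = (d.a * v * d.a⁻¹) * (d.a * u * d.a⁻¹) := by group
    rw [e, Zconj2 v hv]
    exact mul_mem (pow_mem hvK _) (hYK (Yconj_a2 u hu))
  have aNormK : d.a ∈ (Subgroup.normalizer (K : Set G)) := by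
    rw [Subgroup.mem_normalizer_iff'']
    intro h
    constructor
    · exact aK1 h
    · intro hh
      have := aK2 _ hh
      have e : d.a * (d.a⁻¹ * h * d.a) * d.a⁻¹ = h := by group
      rwa [e] at this
  have hNge : d.P ⊔ Subgroup.closure {d.a} ≤ (Subgroup.normalizer (K : Set G)) := by
    refine sup_le PnormK ?_
    rw [Subgroup.closure_le]
    intro s hs
    rw [Set.mem_singleton_iff] at hs
    subst hs
    exact aNormK
  -- if all zz ∈ K then K = P, contradiction
  have genK : (∀ i, zz i ∈ K) → False := by
    intro hall
    apply hKne
    refine le_antisymm hKP ?_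
    rw [hsetP, Subgroup.closure_le]
    intro s hs
    rcases hs with hY | ⟨i, rfl⟩
    · exact hYK (Subgroup.subset_closure hY)
    · exact hall i
  -- normalizer upper bound
  have hNle : (Subgroup.normalizer (K : Set G)) ≤ d.P ⊔ Subgroup.closure {d.a} := by
    intro g hgN
    obtain ⟨w, hw, s, t, rfl⟩ := G_decomp d g
    cases t with
    | false =>
        simp only [Bool.cond_false, mul_one]
        exact mul_mem (Subgroup.mem_sup_left hw)
          (Subgroup.mem_sup_right (zpow_mem (Subgroup.subset_closure (Set.mem_singleton d.a)) s))
    | true =>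
        exfalso
        simp only [Bool.cond_true] at hgN
        have hbN : d.b ∈ (Subgroup.normalizer (K : Set G)) := by
          have h1 : w * d.a ^ s ∈ (Subgroup.normalizer (K : Set G)) := mul_mem (PnormK hw) (zpow_mem aNormK s)
          have h2 := mul_mem (inv_mem h1) hgN
          have e : (w * d.a ^ s)⁻¹ * (w * d.a ^ s * d.b) = d.b := by group
          rwa [e] at h2
        apply genK
        intro i
        have hiff := Subgroup.mem_normalizer_iff''.1 hbN (zz i)
        rw [hbzz i] at hiff
        exact hiff.2 (inv_mem (hyyK i))
  have hNeq : (Subgroup.normalizer (K : Set G)) = d.P ⊔ Subgroup.closure {d.a} := le_antisymm hNle hNge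
  -- maximality of K in P
  have maxK : ∀ L : Subgroup G, K ≤ L → L ≤ d.P → L ≠ K → L = d.P := by
    intro L hKL hLP hne
    have hex : ∃ g0 ∈ L, g0 ∉ K := by
      by_contra hc
      push_neg at hc
      exact hne (le_antisymm hc hKL)
    obtain ⟨g0, hg0L, hg0K⟩ := hex
    obtain ⟨m, hm⟩ := h0spec g0 (hLP hg0L)
    have hh0m : h0 ^ m ∈ L := by
      have e : h0 ^ m = g0 * ((h0 ^ m)⁻¹ * g0)⁻¹ := by group
      rw [e]
      exact mul_mem hg0L (inv_mem (hKL hm))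
    have hpm : ¬ (d.p : ℤ) ∣ m := by
      intro hdvd
      apply hg0K
      have h1 : h0 ^ m ∈ K := by
        obtain ⟨c, rfl⟩ := hdvd
        rw [zpow_mul, zpow_natCast]
        exact zpow_mem (powp h0 h0P) c
      have e : g0 = (h0 ^ m) * ((h0 ^ m)⁻¹ * g0) := by group
      rw [e]
      exact mul_mem h1 hm
    obtain ⟨u, v, huv⟩ := bezout_prime d.hp hpm
    have hh0 : h0 ∈ L := by
      have e : h0 = h0 ^ (m * u + (d.p : ℤ) * v) := by rw [← huv, zpow_one]
      rw [e, zpow_add, zpow_mul, zpow_mul]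
      refine mul_mem (zpow_mem hh0m _) (zpow_mem ?_ _)
      rw [zpow_natCast]
      exact hKL (powp h0 h0P)
    refine le_antisymm hLP ?_
    intro w hw
    obtain ⟨mw, hmw⟩ := h0spec w hw
    have e : w = h0 ^ mw * ((h0 ^ mw)⁻¹ * w) := by group
    rw [e]
    exact mul_mem (zpow_mem hh0 mw) (hKL hmw)
  -- some zz i0 outside K
  have hi0 : ∃ i0, zz i0 ∉ K := by
    by_contra hc
    push_neg at hc
    exact genK hc
  obtain ⟨i0, hi0K⟩ := hi0
  -- SS2 maximal abelian
  have ss2max : ∀ C : Subgroup G, K ≤ C → C ≤ (Subgroup.normalizer (K : Set G)) →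
      (∀ c₁ ∈ C, ∀ c₂ ∈ C, c₁⁻¹ * c₂⁻¹ * c₁ * c₂ ∈ K) → d.P ≤ C → C = d.P := by
    intro C hKC hCN habel hPC
    refine le_antisymm ?_ hPC
    intro c hc
    obtain ⟨w, hw, s, rfl⟩ := mem_P_sup_a d (by rw [← hNeq]; exact hCN hc)
    set z : G := zz i0 with hz
    have hzP : z ∈ d.P := hzzP i0
    have hcond := habel (w * d.a ^ s) hc z (hPC hzP)
    set s' : ℕ := (s % ((2 ^ (d.n - 1) : ℕ) : ℤ)).toNat with hs'
    have hMpos : 0 < (2 : ℕ) ^ (d.n - 1) := by positivity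
    have haS : d.a ^ s = d.a ^ s' := zpow_eq_pow_emod d.han hMpos s
    have hγ : w⁻¹ * z⁻¹ * w * z ∈ K := commK w hw z hzP
    have e : (w * d.a ^ s)⁻¹ * z⁻¹ * (w * d.a ^ s) * z
        = ((d.a ^ s)⁻¹ * (w⁻¹ * z⁻¹ * w * z) * d.a ^ s)
          * (((d.a ^ s)⁻¹ * z * d.a ^ s)⁻¹ * z) := by group
    rw [e] at hcond
    have haN : d.a ^ s ∈ (Subgroup.normalizer (K : Set G)) := zpow_mem aNormK s
    have h1 : (d.a ^ s)⁻¹ * (w⁻¹ * z⁻¹ * w * z) * d.a ^ s ∈ K :=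
      (Subgroup.mem_normalizer_iff''.1 haN _).1 hγ
    have h2 : ((d.a ^ s)⁻¹ * z * d.a ^ s)⁻¹ * z ∈ K := by
      have h3 := mul_mem (inv_mem h1) hcond
      have e2 : ((d.a ^ s)⁻¹ * (w⁻¹ * z⁻¹ * w * z) * d.a ^ s)⁻¹
          * (((d.a ^ s)⁻¹ * (w⁻¹ * z⁻¹ * w * z) * d.a ^ s)
            * (((d.a ^ s)⁻¹ * z * d.a ^ s)⁻¹ * z))
          = ((d.a ^ s)⁻¹ * z * d.a ^ s)⁻¹ * z := by group
      rwa [e2] at h3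
    rw [haS, conj_pow_eq (haz1 i0) s'] at h2
    have e3 : (z ^ qq ^ s')⁻¹ * z = z ^ ((1 : ℤ) - (qq ^ s' : ℕ)) := by
      rw [zpow_sub, zpow_one, zpow_natCast]
      exact (((Commute.refl z).pow_left (qq ^ s')).inv_left).eq
    rw [e3] at h2
    have hdvd : (d.p : ℤ) ∣ ((1 : ℤ) - (qq ^ s' : ℕ)) := (tK z hzP hi0K _).1 h2
    have hcast : ((qq : ZMod d.p)) ^ s' = 1 := by
      have h4 : (((1 : ℤ) - (qq ^ s' : ℕ) : ℤ) : ZMod d.p) = 0 :=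
        (ZMod.intCast_zmod_eq_zero_iff_dvd _ _).2 hdvd
      push_cast at h4
      rw [sub_eq_zero] at h4
      exact h4.symm
    have hdvd2 : 2 ^ (d.n - 1) ∣ s' := hqq ▸ orderOf_dvd_of_pow_eq_one hcast
    have hlt : s' < 2 ^ (d.n - 1) := by
      have hMpos' : (0 : ℤ) < ((2 ^ (d.n - 1) : ℕ) : ℤ) := by exact_mod_cast hMpos
      have hb1 : s % ((2 ^ (d.n - 1) : ℕ) : ℤ) < ((2 ^ (d.n - 1) : ℕ) : ℤ) :=
        Int.emod_lt_of_pos s hMpos'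
      have hb0 : 0 ≤ s % ((2 ^ (d.n - 1) : ℕ) : ℤ) := Int.emod_nonneg s hMpos'.ne'
      omega
    have hs0 : s' = 0 := Nat.eq_zero_of_dvd_of_lt hdvd2 hlt
    have : d.a ^ s = 1 := by rw [haS, hs0, pow_zero]
    rw [this, mul_one]
    exact hw
  -- SS3
  have epsEq : Paper.eps d.P K = Paper.hat K - Paper.hat d.P := by
    have hset : {L : Subgroup G | Paper.MinimalOver d.P K L} = {d.P} := by
      ext L
      simp only [Set.mem_setOf_eq, Set.mem_singleton_iff]
      constructor
      · rintro ⟨⟨hLP, hKL, _⟩, _⟩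
        exact maxK L hKL.le hLP hKL.ne'
      · rintro rfl
        refine ⟨⟨le_rfl, lt_of_le_of_ne hKP hKne, ?_⟩, ?_⟩
        · intro h hh g hg
          exact mul_mem (mul_mem (inv_mem hh) hg) hh
        · intro L' hL' hle
          exact maxK L' hL'.2.1.le (hL'.1.trans le_rfl) hL'.2.1.ne'
    rw [Paper.eps, if_neg (fun h : d.P = K => hKne h.symm)]
    rw [Set.toFinset_congr hset, Set.toFinset_singleton, Finset.toList_singleton,
      List.map_cons, List.map_nil, List.prod_cons, List.prod_nil, mul_one]
  have ss3 : ∀ g : G, g ∉ (Subgroup.normalizer (K : Set G)) →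
      Paper.eps d.P K * (MonoidAlgebra.of ℚ G g⁻¹ * Paper.eps d.P K * MonoidAlgebra.of ℚ G g)
        = 0 := by
    intro g hg
    rw [epsEq]
    set M : Subgroup G := K.map (MulAut.conj g⁻¹).toMonoidHom with hM
    have hMP : M ≤ d.P := by
      rintro m ⟨κ, hκ, rfl⟩
      show (MulAut.conj g⁻¹) κ ∈ d.P
      rw [MulAut.conj_apply]
      exact Pn.conj_mem κ (hKP hκ) g⁻¹
    have hconjK : MonoidAlgebra.of ℚ G g⁻¹ * Paper.hat K * MonoidAlgebra.of ℚ G g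
        = Paper.hat M := conj_hat g K
    have hconjP : MonoidAlgebra.of ℚ G g⁻¹ * Paper.hat d.P * MonoidAlgebra.of ℚ G g
        = Paper.hat d.P := by
      rw [conj_hat g d.P, map_conj_eq Pn g⁻¹]
    have hMK : M ≠ K := by
      intro he
      apply hg
      rw [Subgroup.mem_normalizer_iff'']
      intro h
      constructor
      · intro hh
        have h1 : (MulAut.conj g⁻¹).toMonoidHom h ∈ M := Subgroup.mem_map_of_mem _ hh
        rw [he] at h1
        have e : (MulAut.conj g⁻¹).toMonoidHom h = g⁻¹ * h * g := by
          show g⁻¹ * h * g⁻¹⁻¹ = g⁻¹ * h * g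
          rw [inv_inv]
        rwa [e] at h1
      · intro hh
        rw [← he] at hh
        obtain ⟨κ, hκ, hκe⟩ := hh
        have e : (MulAut.conj g⁻¹).toMonoidHom κ = g⁻¹ * κ * g := by
          show g⁻¹ * κ * g⁻¹⁻¹ = g⁻¹ * κ * g
          rw [inv_inv]
        rw [e] at hκe
        have : κ = h := by
          have := hκe
          exact mul_left_cancel (mul_right_cancel this)
        rwa [← this]
    have hcardM : Nat.card M = Nat.card K :=
      (Nat.card_congr ((MulEquiv.subgroupMap (MulAut.conj g⁻¹ : G ≃* G) K).toEquiv)).symm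
    have ht : ∃ t, t ∈ M ∧ t ∉ K := by
      by_contra hc
      push_neg at hc
      exact hMK (Subgroup.eq_of_le_of_card_ge hc (le_of_eq hcardM.symm))
    obtain ⟨t, htM, htK⟩ := ht
    have htP : t ∈ d.P := hMP htM
    -- coset decomposition of P along t
    have hcos : ∀ w ∈ d.P, ∃ j : ℕ, j < d.p ∧ (t ^ j)⁻¹ * w ∈ K := by
      intro w hw
      obtain ⟨m0, hm0⟩ := h0spec t htP
      have hpm0 : ¬ (d.p : ℤ) ∣ m0 := by
        intro hdvd
        apply htK
        have h1 : h0 ^ m0 ∈ K := by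
          obtain ⟨c, rfl⟩ := hdvd
          rw [zpow_mul, zpow_natCast]
          exact zpow_mem (powp h0 h0P) c
        have e : t = (h0 ^ m0) * ((h0 ^ m0)⁻¹ * t) := by group
        rw [e]
        exact mul_mem h1 hm0
      obtain ⟨mw, hmw⟩ := h0spec w hw
      obtain ⟨u, v, huv⟩ := bezout_prime d.hp hpm0
      set j' : ℤ := u * mw with hj'
      obtain ⟨κ', hκ', he'⟩ := prodzpow (h0 ^ m0) (zpow_mem h0P m0) ((h0 ^ m0)⁻¹ * t) hm0 j'
      have htj : t ^ j' = h0 ^ (m0 * j') * κ' := by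
        rw [show h0 ^ m0 * ((h0 ^ m0)⁻¹ * t) = t from by group] at he'
        rw [he', ← zpow_mul]
      have hkey : (t ^ j')⁻¹ * w ∈ K := by
        have hw' : w = h0 ^ mw * ((h0 ^ mw)⁻¹ * w) := by group
        rw [htj, hw']
        have e : (h0 ^ (m0 * j') * κ')⁻¹ * (h0 ^ mw * ((h0 ^ mw)⁻¹ * w))
            = κ'⁻¹ * (h0 ^ mw * (h0 ^ (m0 * j'))⁻¹) * ((h0 ^ mw)⁻¹ * w) := by group
        rw [e]
        refine mul_mem (mul_mem (inv_mem hκ') ?_) hmw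
        have e2 : h0 ^ mw * (h0 ^ (m0 * j'))⁻¹ = h0 ^ (mw - m0 * j') := by
          rw [sub_eq_add_neg, zpow_add, zpow_neg]
        rw [e2]
        have e3 : mw - m0 * j' = (d.p : ℤ) * (v * mw) := by
          rw [hj']
          have : (1 : ℤ) * mw = (m0 * u + (d.p : ℤ) * v) * mw := by rw [← huv]
          ring_nf
          ring_nf at this
          linarith
        rw [e3, zpow_mul, zpow_natCast]
        exact zpow_mem (powp h0 h0P) _
      refine ⟨(j' % (d.p : ℤ)).toNat, ?_, ?_⟩
      · have hppos : (0 : ℤ) < (d.p : ℤ) := by exact_mod_cast d.hp.pos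
        have hb1 : j' % (d.p : ℤ) < (d.p : ℤ) := Int.emod_lt_of_pos j' hppos
        have hb0 : 0 ≤ j' % (d.p : ℤ) := Int.emod_nonneg j' hppos.ne'
        omega
      · have hppos : (0 : ℤ) < (d.p : ℤ) := by exact_mod_cast d.hp.pos
        have hb0 : 0 ≤ j' % (d.p : ℤ) := Int.emod_nonneg j' hppos.ne'
        have hjz : ((( j' % (d.p : ℤ)).toNat : ℤ)) = j' % (d.p : ℤ) := Int.toNat_of_nonneg hb0
        have e : (t ^ (j' % (d.p : ℤ)).toNat)⁻¹ * w
            = t ^ (j' - j' % (d.p : ℤ)) * ((t ^ j')⁻¹ * w) := by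
          rw [zpow_sub, ← zpow_natCast t ((j' % (d.p : ℤ)).toNat), hjz]
          group
        rw [e]
        refine mul_mem ((tK t htP htK _).2 ?_) hkey
        have h5 : j' - j' % (d.p : ℤ) = (d.p : ℤ) * (j' / (d.p : ℤ)) := by
          have h6 := Int.emod_add_mul_ediv j' (d.p : ℤ)
          linarith
        exact ⟨j' / (d.p : ℤ), h5⟩
    have huniq : ∀ (j1 j2 : ℕ), j1 < d.p → j2 < d.p → ∀ κ1 κ2 : G, κ1 ∈ K → κ2 ∈ K →
        t ^ j1 * κ1 = t ^ j2 * κ2 → j1 = j2 := by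
      intro j1 j2 hj1 hj2 κ1 κ2 hκ1 hκ2 heq
      have h1 : t ^ ((j1 : ℤ) - (j2 : ℤ)) ∈ K := by
        have e : t ^ ((j1 : ℤ) - (j2 : ℤ)) = (t ^ j2)⁻¹ * (t ^ j1 * κ1) * κ1⁻¹ := by
          rw [zpow_sub, zpow_natCast, zpow_natCast]
          group
        rw [e, heq]
        have e2 : (t ^ j2)⁻¹ * (t ^ j2 * κ2) * κ1⁻¹ = κ2 * κ1⁻¹ := by group
        rw [e2]
        exact mul_mem hκ2 (inv_mem hκ1)
      have hdvd := (tK t htP htK _).1 h1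
      have : (j1 : ℤ) - (j2 : ℤ) = 0 := by
        refine Int.eq_zero_of_abs_lt_dvd hdvd ?_
        rw [abs_sub_lt_iff]
        constructor <;> [skip; skip] <;>
          · push_cast
            omega
      omega
    -- the bijection
    have hbij : Function.Bijective
        (fun jk : Fin d.p × K =>
          (⟨t ^ (jk.1 : ℕ) * (jk.2 : G),
            mul_mem (pow_mem htP _) (hKP jk.2.2)⟩ : d.P)) := by
      constructor
      · rintro ⟨j1, κ1⟩ ⟨j2, κ2⟩ h
        rw [Subtype.ext_iff] at h
        have hj := huniq j1 j2 j1.2 j2.2 κ1 κ2 κ1.2 κ2.2 h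
        have hjf : j1 = j2 := Fin.ext hj
        subst hjf
        have : (κ1 : G) = κ2 := by
          have := h
          simpa using mul_left_cancel this
        exact Prod.ext rfl (Subtype.ext this)
      · rintro ⟨w, hw⟩
        obtain ⟨j, hj, hjK⟩ := hcos w hw
        refine ⟨(⟨j, hj⟩, ⟨(t ^ j)⁻¹ * w, hjK⟩), ?_⟩
        ext
        show t ^ j * ((t ^ j)⁻¹ * w) = w
        group
    have cardP : (Nat.card d.P : ℚ) = (d.p : ℚ) * (Nat.card K : ℚ) := by
      have h1 : Nat.card d.P = Nat.card (Fin d.p × K) :=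
        (Nat.card_congr (Equiv.ofBijective _ hbij)).symm
      rw [h1]
      rw [Nat.card_eq_fintype_card, Fintype.card_prod, Fintype.card_fin,
        ← Nat.card_eq_fintype_card]
      push_cast
      ring
    have sumP : ∑ m : d.P, MonoidAlgebra.of ℚ G (m : G)
        = ∑ j ∈ Finset.range d.p, ∑ κ : K, MonoidAlgebra.of ℚ G (t ^ j * (κ : G)) := by
      rw [← Fintype.sum_equiv (Equiv.ofBijective _ hbij)
        (fun jk : Fin d.p × K => MonoidAlgebra.of ℚ G (t ^ (jk.1 : ℕ) * (jk.2 : G)))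
        (fun m : d.P => MonoidAlgebra.of ℚ G (m : G)) (fun jk => rfl)]
      rw [Fintype.sum_prod_type]
      rw [Fin.sum_univ_eq_sum_range
        (fun j => ∑ κ : K, MonoidAlgebra.of ℚ G (t ^ j * (κ : G)))]
    have hppos : (0 : ℚ) < (d.p : ℚ) := by exact_mod_cast d.hp.pos
    have hatPe : Paper.hat d.P = (d.p : ℚ)⁻¹ • ∑ j ∈ Finset.range d.p,
        (MonoidAlgebra.of ℚ G (t ^ j) * Paper.hat K) := by
      show (Nat.card d.P : ℚ)⁻¹ • ∑ m : d.P, MonoidAlgebra.of ℚ G (m : G) = _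
      rw [sumP, cardP, mul_inv, mul_smul]
      congr 1
      rw [Finset.smul_sum]
      refine Finset.sum_congr rfl ?_
      intro j _
      have e : ∀ κ : K, MonoidAlgebra.of ℚ G (t ^ j * (κ : G))
          = MonoidAlgebra.of ℚ G (t ^ j) * MonoidAlgebra.of ℚ G (κ : G) := by
        intro κ; rw [← map_mul]
      rw [Finset.sum_congr rfl (fun κ _ => e κ), ← Finset.mul_sum]
      show (Nat.card K : ℚ)⁻¹ • (MonoidAlgebra.of ℚ G (t ^ j) * ∑ κ : K, MonoidAlgebra.of ℚ G (κ : G))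
          = MonoidAlgebra.of ℚ G (t ^ j) * Paper.hat K
      rw [show Paper.hat K = (Nat.card K : ℚ)⁻¹ • ∑ κ : K, MonoidAlgebra.of ℚ G (κ : G) from rfl]
      rw [mul_smul_comm]
    have h3 : ∀ j : ℕ, MonoidAlgebra.of ℚ G (t ^ j) * Paper.hat K
        = Paper.hat K * MonoidAlgebra.of ℚ G (t ^ j) := by
      intro j
      refine of_hat_comm ?_ ?_
      · intro κ hκ
        have := hKnormal (t ^ j)⁻¹ (inv_mem (pow_mem htP j)) κ hκ
        simpa using this
      · intro κ hκ
        exact hKnormal (t ^ j) (pow_mem htP j) κ hκ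
    have KM : Paper.hat K * Paper.hat M = Paper.hat d.P := by
      have h1 : Paper.hat d.P * Paper.hat M = Paper.hat d.P := hat_mul_hat_right hMP
      have h2 : Paper.hat d.P * Paper.hat M
          = (d.p : ℚ)⁻¹ • ∑ j ∈ Finset.range d.p,
            (MonoidAlgebra.of ℚ G (t ^ j) * (Paper.hat K * Paper.hat M)) := by
        rw [hatPe, smul_mul_assoc, Finset.sum_mul]
        congr 1
        exact Finset.sum_congr rfl fun j _ => by rw [mul_assoc]
      have h4 : ∀ j ∈ Finset.range d.p,
          MonoidAlgebra.of ℚ G (t ^ j) * (Paper.hat K * Paper.hat M)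
            = Paper.hat K * Paper.hat M := by
        intro j _
        rw [← mul_assoc, h3 j, mul_assoc, of_mul_hat (pow_mem htM j)]
      rw [Finset.sum_congr rfl h4, Finset.sum_const, Finset.card_range,
        ← Nat.cast_smul_eq_nsmul ℚ, smul_smul, inv_mul_cancel₀ hppos.ne', one_smul] at h2
      rw [h1] at h2
      exact h2.symm
    have hgoal : MonoidAlgebra.of ℚ G g⁻¹ * (Paper.hat K - Paper.hat d.P)
        * MonoidAlgebra.of ℚ G g = Paper.hat M - Paper.hat d.P := by
      rw [mul_sub, sub_mul, hconjK, hconjP]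
    rw [hgoal]
    have expand : (Paper.hat K - Paper.hat d.P) * (Paper.hat M - Paper.hat d.P)
        = Paper.hat K * Paper.hat M - Paper.hat K * Paper.hat d.P
          - Paper.hat d.P * Paper.hat M + Paper.hat d.P * Paper.hat d.P := by
      noncomm_ring
    rw [expand, KM, hat_mul_hat_left hKP, hat_mul_hat_right hMP, hat_mul_hat_right le_rfl]
    abel
  refine ⟨hNeq, ⟨PnormK, ?_⟩, ⟨hcyc, commK, ss2max⟩, ss3⟩
  intro g hgN h hh
  have := Pn.conj_mem h hh g⁻¹
  simpa using this

end SSP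

end Main
/-- Let `K ⊴ P`, `K ≠ P`, with `P/K` cyclic, such that `K` contains
none of the subgroups `⟨x, y₁^{k^j}z₁, …, y_r^{k^j}z_r⟩` (`1 ≤ j ≤ 2^{n-1}`), and such
that `⟨x, y₁, …, y_r⟩ ≤ K` or `⟨x, z₁, …, z_r⟩ ≤ K`.  Then `N_G(K) = ⟨P, a⟩` and
`(P,K)` is a strong Shoda pair of `G`. -/
theorem stmt13 {G : Type*} [Group G] [Fintype G] (d : Paper.GData G)
    (K : Subgroup G) (hKP : K ≤ d.P) (hKnormal : Paper.NormalIn d.P K) (hKne : K ≠ d.P)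
    (hcyc : Paper.CyclicQuot d.P K)
    (hnj : ¬ ∃ j, 1 ≤ j ∧ j ≤ 2 ^ (d.n - 1) ∧
      Subgroup.closure (({d.x} : Set G) ∪ Set.range fun i => d.y i ^ d.k ^ j * d.z i) ≤ K)
    (hyz : Subgroup.closure (({d.x} : Set G) ∪ Set.range d.y) ≤ K ∨
      Subgroup.closure (({d.x} : Set G) ∪ Set.range d.z) ≤ K) :
    Subgroup.normalizer (K : Set G) = d.P ⊔ Subgroup.closure {d.a} ∧
    Paper.IsStrongShodaPair d.P K := by
  rcases hyz with hY | hZ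
  · -- case `⟨x, y⟩ ≤ K`
    refine SSP.main d K hKP hKnormal hKne hcyc d.y d.z d.k d.q rfl hY
      (fun i => SSP.rel_ay d i) (fun i => SSP.rel_ay' d i)
      (fun i => SSP.rel_az d i) (fun i => SSP.rel_az' d i)
      (fun j => (SSP.rel_xz d j).symm) ?_ ?_
      (fun i j => SSP.rel_zz d i j) d.hzp (fun i => SSP.rel_bz d i) (SSP.orderOf_q d)
    · intro j i
      by_cases hij : i = j
      · subst hij
        rw [SSP.rel_zyz' d i]
        exact mul_mem (Subgroup.subset_closure (Set.mem_union_right _ ⟨i, rfl⟩))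
          (inv_mem (Subgroup.subset_closure (Set.mem_union_left _ rfl)))
      · rw [SSP.conj_self_of_commute' ((SSP.rel_yz' d i j hij).symm)]
        exact Subgroup.subset_closure (Set.mem_union_right _ ⟨i, rfl⟩)
    · intro j i
      by_cases hij : i = j
      · subst hij
        rw [SSP.rel_zyz d i]
        exact mul_mem (Subgroup.subset_closure (Set.mem_union_right _ ⟨i, rfl⟩))
          (Subgroup.subset_closure (Set.mem_union_left _ rfl))
      · rw [SSP.conj_self_of_commute ((SSP.rel_yz' d i j hij).symm)]
        exact Subgroup.subset_closure (Set.mem_union_right _ ⟨i, rfl⟩)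
  · -- case `⟨x, z⟩ ≤ K`
    refine SSP.main d K hKP hKnormal hKne hcyc d.z d.y d.q d.k
      (by rw [Set.union_right_comm]; rfl) hZ
      (fun i => SSP.rel_az d i) (fun i => SSP.rel_az' d i)
      (fun i => SSP.rel_ay d i) (fun i => SSP.rel_ay' d i)
      (fun j => (SSP.rel_xy d j).symm) ?_ ?_
      (fun i j => SSP.rel_yy d i j) d.hyp (fun i => SSP.rel_by d i) d.hordk
    · intro j i
      by_cases hij : j = i
      · subst hij
        rw [SSP.rel_yzy' d j]
        exact mul_mem (Subgroup.subset_closure (Set.mem_union_right _ ⟨j, rfl⟩))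
          (Subgroup.subset_closure (Set.mem_union_left _ rfl))
      · rw [SSP.conj_self_of_commute' (SSP.rel_yz' d j i hij)]
        exact Subgroup.subset_closure (Set.mem_union_right _ ⟨i, rfl⟩)
    · intro j i
      by_cases hij : j = i
      · subst hij
        rw [SSP.rel_yzy d j]
        exact mul_mem (Subgroup.subset_closure (Set.mem_union_right _ ⟨j, rfl⟩))
          (inv_mem (Subgroup.subset_closure (Set.mem_union_left _ rfl)))
      · rw [SSP.conj_self_of_commute (SSP.rel_yz' d j i hij)]
        exact Subgroup.subset_closure (Set.mem_union_right _ ⟨i, rfl⟩)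
end

section
/- Let G be the group of order p^{2r+1}·2^n described in the context. Then: (a) the number of subgroups K of P with K normal in P, K ≠ P, and P/K cyclic equals (p^{2r} − 1)/(p − 1); and (b) among these, the number of K that contain the subgroup generated by x, y₁^{k^j}z₁, …, y_r^{k^j}z_r for some j with 1 ≤ j ≤ 2^{n−1} equals 2^{n−1}·(p^r − 1)/(p − 1). -/
open scoped Classical

namespace S15

variable {G : Type*} [Group G]

/-- generic modular power lemmas -/
lemma pow_mod_eq {g : G} {N : ℕ} (hg : g ^ N = 1) (m : ℕ) : g ^ (m % N) = g ^ m := by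
  conv_rhs => rw [← Nat.mod_add_div m N]
  rw [pow_add, pow_mul, hg, one_pow, mul_one]

lemma pow_val_add {g : G} {N : ℕ} [NeZero N] (hg : g ^ N = 1) (c c' : ZMod N) :
    g ^ (c + c').val = g ^ c.val * g ^ c'.val := by
  rw [ZMod.val_add, pow_mod_eq hg, pow_add]

lemma pow_val_natCast {g : G} {N : ℕ} [NeZero N] (hg : g ^ N = 1) (m : ℕ) :
    g ^ ((m : ZMod N)).val = g ^ m := by
  rw [ZMod.val_natCast, pow_mod_eq hg]

lemma pow_val_zero {g : G} {N : ℕ} [NeZero N] : g ^ ((0 : ZMod N)).val = 1 := by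
  simp

lemma pow_val_neg {g : G} {N : ℕ} [NeZero N] (hg : g ^ N = 1) (c : ZMod N) :
    g ^ (-c).val = (g ^ c.val)⁻¹ := by
  have h := pow_val_add hg c (-c)
  rw [add_neg_cancel] at h
  simp only [ZMod.val_zero, pow_zero] at h
  exact (inv_eq_of_mul_eq_one_right h.symm).symm

lemma pow_val_sub_natCast {g : G} {N : ℕ} [NeZero N] (hg : g ^ N = 1) (c : ZMod N) (m : ℕ) :
    g ^ (c - (m:ZMod N)).val = g ^ c.val * (g ^ m)⁻¹ := by
  rw [sub_eq_add_neg, pow_val_add hg, pow_val_neg hg, pow_val_natCast hg]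





variable (p r : ℕ)

abbrev Vec := (Fin r → ZMod p) × (Fin r → ZMod p)

@[ext] structure Hei where
  c : ZMod p
  v : Vec p r

namespace Hei

variable {p r : ℕ}

/-- dot pairing used in the Heisenberg cocycle -/
def cdot (u v : Fin r → ZMod p) : ZMod p := ∑ i, u i * v i

instance : Mul (Hei p r) :=
  ⟨fun s t => ⟨s.c + t.c - cdot s.v.2 t.v.1, s.v + t.v⟩⟩

instance : One (Hei p r) := ⟨⟨0, 0⟩⟩

instance : Inv (Hei p r) := ⟨fun s => ⟨-s.c - cdot s.v.2 s.v.1, -s.v⟩⟩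

lemma mul_def (s t : Hei p r) :
    s * t = ⟨s.c + t.c - cdot s.v.2 t.v.1, s.v + t.v⟩ := rfl

lemma one_def : (1 : Hei p r) = ⟨0, 0⟩ := rfl

lemma inv_def (s : Hei p r) : s⁻¹ = ⟨-s.c - cdot s.v.2 s.v.1, -s.v⟩ := rfl

lemma cdot_add_left (u u' v : Fin r → ZMod p) :
    cdot (u + u') v = cdot u v + cdot u' v := by
  simp [cdot, add_mul, Finset.sum_add_distrib]

lemma cdot_add_right (u v v' : Fin r → ZMod p) :
    cdot u (v + v') = cdot u v + cdot u v' := by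
  simp [cdot, mul_add, Finset.sum_add_distrib]

lemma cdot_neg_left (u v : Fin r → ZMod p) : cdot (-u) v = -cdot u v := by
  simp [cdot]

lemma cdot_neg_right (u v : Fin r → ZMod p) : cdot u (-v) = -cdot u v := by
  simp [cdot]

@[simp] lemma cdot_zero_left (v : Fin r → ZMod p) : cdot 0 v = 0 := by simp [cdot]
@[simp] lemma cdot_zero_right (v : Fin r → ZMod p) : cdot v 0 = 0 := by simp [cdot]

lemma cdot_smul_left (a : ZMod p) (u v : Fin r → ZMod p) :
    cdot (a • u) v = a * cdot u v := by
  simp [cdot, Finset.mul_sum, mul_assoc]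

lemma cdot_smul_right (a : ZMod p) (u v : Fin r → ZMod p) :
    cdot u (a • v) = a * cdot u v := by
  simp only [cdot, Finset.mul_sum, Pi.smul_apply, smul_eq_mul]
  apply Finset.sum_congr rfl; intros; ring

instance : Group (Hei p r) :=
  Group.ofLeftAxioms
    (fun s t u => by
      simp only [mul_def, Prod.fst_add, Prod.snd_add, cdot_add_left, cdot_add_right]
      ext
      · simp; ring
      · simp [add_assoc]
      · simp [add_assoc])
    (fun s => by
      simp only [one_def, mul_def]
      ext <;> simp)
    (fun s => by
      simp only [inv_def, mul_def, one_def]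
      ext
      · simp [cdot_neg_left]; ring
      · simp
      · simp)

@[simp] lemma mul_v (s t : Hei p r) : (s * t).v = s.v + t.v := rfl
@[simp] lemma one_v : (1 : Hei p r).v = 0 := rfl
@[simp] lemma inv_v (s : Hei p r) : (s⁻¹).v = -s.v := rfl

@[simp] lemma pow_v (s : Hei p r) (m : ℕ) : (s ^ m).v = m • s.v := by
  induction m with
  | zero => simp
  | succ m ih => rw [pow_succ, mul_v, ih, succ_nsmul]

@[simp] lemma zpow_v (s : Hei p r) (m : ℤ) : (s ^ m).v = m • s.v := by
  cases m with
  | ofNat m => simpa using pow_v s m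
  | negSucc m =>
      rw [zpow_negSucc, inv_v, pow_v, negSucc_zsmul]

lemma central_mul (c : ZMod p) (t : Hei p r) : (⟨c, 0⟩ : Hei p r) * t = ⟨c + t.c, t.v⟩ := by
  simp [mul_def]

lemma mul_central (c : ZMod p) (t : Hei p r) : t * (⟨c, 0⟩ : Hei p r) = ⟨t.c + c, t.v⟩ := by
  simp [mul_def]

lemma central_pow (c : ZMod p) (m : ℕ) : (⟨c, 0⟩ : Hei p r) ^ m = ⟨m • c, 0⟩ := by
  induction m with
  | zero => rw [pow_zero, one_def]; simp
  | succ m ih =>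
      rw [pow_succ, ih, mul_central]
      congr 1
      push_cast
      ring

def heiEquiv : Hei p r ≃ (ZMod p × Vec p r) where
  toFun h := (h.c, h.v)
  invFun x := ⟨x.1, x.2⟩
  left_inv h := rfl
  right_inv x := rfl

instance [NeZero p] : Fintype (Hei p r) :=
  Fintype.ofEquiv _ (heiEquiv (p := p) (r := r)).symm

lemma card_hei [NeZero p] : Fintype.card (Hei p r) = p ^ (2 * r + 1) := by
  rw [Fintype.card_congr (heiEquiv (p := p) (r := r))]
  simp only [Fintype.card_prod, Fintype.card_fun, ZMod.card, Fintype.card_fin]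
  ring

end Hei
end S15

section Rel
variable {G : Type*} [Group G] [Fintype G] (d : Paper.GData G)

lemma rel_mul {u v w : G} (h : u⁻¹ * v⁻¹ * u * v = w) : u * v = v * u * w := by
  rw [← h]; group

lemma comm_of_rel {u v : G} (h : u⁻¹ * v⁻¹ * u * v = 1) : Commute u v := by
  have := rel_mul h; rw [mul_one] at this; exact this

lemma conj_pow' {a y w : G} (h : a⁻¹ * y * a = w) (m : ℕ) : a⁻¹ * y ^ m * a = w ^ m := by
  induction m with
  | zero => simp
  | succ m ih =>
      rw [pow_succ, pow_succ, ← ih, ← h]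
      group

lemma swap_inv {X Y Z : G} (h : X * Y = Z * X) : X * Y⁻¹ = Z⁻¹ * X := by
  have h1 : Y = X⁻¹ * (Z * X) := by rw [← h]; group
  rw [h1]; group

namespace Paper.GData

lemma hp1 : 1 < d.p := d.hp.one_lt

instance : NeZero d.p := ⟨d.hp.ne_zero⟩

lemma cxy (i) : Commute d.x (d.y i) := comm_of_rel (d.hxy i)
lemma cxz (i) : Commute d.x (d.z i) := comm_of_rel (d.hxz i)
lemma cyy (i j) : Commute (d.y i) (d.y j) := comm_of_rel (d.hyy i j)
lemma czz (i j) : Commute (d.z i) (d.z j) := comm_of_rel (d.hzz i j)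
lemma cyz' {i j} (h : i ≠ j) : Commute (d.y i) (d.z j) := comm_of_rel (d.hyz' i j h)
lemma cax : Commute d.a d.x := comm_of_rel d.hax

lemma zyx (i) : d.z i * d.y i * d.x = d.y i * d.z i := by
  have h := rel_mul (d.hyz i)
  rw [h]

lemma hb_inv : d.b⁻¹ = d.b := by
  have h := d.hb2
  rw [pow_two] at h
  exact inv_eq_of_mul_eq_one_right h

/- conjugation by a -/
lemma ya (i) : d.y i * d.a = d.a * d.y i ^ d.k := by
  have h3 : d.a⁻¹ * d.y i * d.a = d.y i ^ (d.k : ℤ) := by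
    have h := d.hay i
    have h2 : d.a⁻¹ * (d.y i)⁻¹ * d.a = d.y i ^ ((1:ℤ) - d.k) * (d.y i)⁻¹ := by
      rw [← h]; group
    have h3' : d.a⁻¹ * (d.y i)⁻¹ * d.a = d.y i ^ (-(d.k : ℤ)) := by
      rw [h2]; group
    have h4 := congrArg (fun g => g⁻¹) h3'
    simpa [mul_inv_rev, mul_assoc, zpow_neg] using h4
  have h5 := congrArg (fun g => d.a * g) h3
  simpa [mul_assoc, ← zpow_natCast] using h5

lemma za (i) : d.z i * d.a = d.a * d.z i ^ d.q := by
  have h3 : d.a⁻¹ * d.z i * d.a = d.z i ^ (d.q : ℤ) := by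
    have h := d.haz i
    have h2 : d.a⁻¹ * (d.z i)⁻¹ * d.a = d.z i ^ ((1:ℤ) - d.q) * (d.z i)⁻¹ := by
      rw [← h]; group
    have h3' : d.a⁻¹ * (d.z i)⁻¹ * d.a = d.z i ^ (-(d.q : ℤ)) := by
      rw [h2]; group
    have h4 := congrArg (fun g => g⁻¹) h3'
    simpa [mul_inv_rev, mul_assoc, zpow_neg] using h4
  have h5 := congrArg (fun g => d.a * g) h3
  simpa [mul_assoc, ← zpow_natCast] using h5

lemma kq_one : ((d.k * d.q : ℕ) : ZMod d.p) = 1 := by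
  push_cast
  exact d.hkq

/-- `g ^ (k*q) = g` for `g` of order dividing `p`. -/
lemma pow_kq {g : G} (hg : g ^ d.p = 1) : g ^ (d.k * d.q) = g := by
  have h1 : g ^ (d.k * d.q) = g ^ (((d.k * d.q : ℕ) : ZMod d.p)).val := by
    rw [S15.pow_val_natCast hg]
  rw [h1, kq_one]
  rw [ZMod.val_one_eq_one_mod, Nat.mod_eq_of_lt d.hp1, pow_one]

end Paper.GData
end Rel

section Rel2
variable {G : Type*} [Group G] [Fintype G]

lemma pconj {a w u : G} (h : w * a = a * u) (j : ℕ) : w ^ j * a = a * u ^ j := by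
  induction j with
  | zero => simp
  | succ j ih =>
      rw [pow_succ, pow_succ, mul_assoc, h, ← mul_assoc, ih]
      group

lemma pconj' {a w u : G} (h : a * w = u * a) (j : ℕ) : a * w ^ j = u ^ j * a := by
  induction j with
  | zero => simp
  | succ j ih =>
      rw [pow_succ, pow_succ, ← mul_assoc, ih, mul_assoc, h]
      group

variable (d : Paper.GData G)

namespace Paper.GData

lemma hbb : d.b * d.b = 1 := by rw [← pow_two]; exact d.hb2

/-- `a * y = y^q * a` -/
lemma a_y (i) : d.a * d.y i = d.y i ^ d.q * d.a := by
  have h := pconj (d.ya i) d.q    -- y^q * a = a * (y^k)^q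
  rw [← pow_mul, d.pow_kq (d.hyp i)] at h
  exact h.symm

lemma a_z (i) : d.a * d.z i = d.z i ^ d.k * d.a := by
  have h := pconj (d.za i) d.k
  rw [← pow_mul, Nat.mul_comm, d.pow_kq (d.hzp i)] at h
  exact h.symm

lemma a_ypow (i) (j : ℕ) : d.a * d.y i ^ j = d.y i ^ (d.q * j) * d.a := by
  have h := pconj' (d.a_y i) j
  rwa [← pow_mul] at h

lemma a_zpow (i) (j : ℕ) : d.a * d.z i ^ j = d.z i ^ (d.k * j) * d.a := by
  have h := pconj' (d.a_z i) j
  rwa [← pow_mul] at h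

lemma apow_ypow (i) (m j : ℕ) : d.a ^ m * d.y i ^ j = d.y i ^ (d.q ^ m * j) * d.a ^ m := by
  induction m with
  | zero => simp
  | succ m ih =>
      calc d.a ^ (m+1) * d.y i ^ j = d.a * (d.a ^ m * d.y i ^ j) := by
            rw [pow_succ']; group
        _ = d.a * (d.y i ^ (d.q ^ m * j) * d.a ^ m) := by rw [ih]
        _ = (d.a * d.y i ^ (d.q ^ m * j)) * d.a ^ m := by group
        _ = d.y i ^ (d.q * (d.q ^ m * j)) * d.a * d.a ^ m := by rw [d.a_ypow]
        _ = d.y i ^ (d.q ^ (m+1) * j) * d.a ^ (m+1) := by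
            rw [← mul_assoc (d.q) _ _, ← pow_succ', mul_assoc, ← pow_succ']

lemma apow_zpow (i) (m j : ℕ) : d.a ^ m * d.z i ^ j = d.z i ^ (d.k ^ m * j) * d.a ^ m := by
  induction m with
  | zero => simp
  | succ m ih =>
      calc d.a ^ (m+1) * d.z i ^ j = d.a * (d.a ^ m * d.z i ^ j) := by
            rw [pow_succ']; group
        _ = d.a * (d.z i ^ (d.k ^ m * j) * d.a ^ m) := by rw [ih]
        _ = (d.a * d.z i ^ (d.k ^ m * j)) * d.a ^ m := by group
        _ = d.z i ^ (d.k * (d.k ^ m * j)) * d.a * d.a ^ m := by rw [d.a_zpow]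
        _ = d.z i ^ (d.k ^ (m+1) * j) * d.a ^ (m+1) := by
            rw [← mul_assoc (d.k) _ _, ← pow_succ', mul_assoc, ← pow_succ']

lemma apow_ypow_inv (i) (m j : ℕ) :
    d.a ^ m * (d.y i ^ j)⁻¹ = (d.y i ^ (d.q ^ m * j))⁻¹ * d.a ^ m := by
  exact swap_inv (d.apow_ypow i m j)

lemma apow_zpow_inv (i) (m j : ℕ) :
    d.a ^ m * (d.z i ^ j)⁻¹ = (d.z i ^ (d.k ^ m * j))⁻¹ * d.a ^ m := by
  exact swap_inv (d.apow_zpow i m j)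

/- b relations -/
lemma bx : d.b * d.x = d.x⁻¹ * d.b := by
  have h1 : d.b⁻¹ * d.x⁻¹ * d.b = d.x := by
    have := congrArg (fun g => g * d.x⁻¹) d.hbx
    simp only [pow_two] at this
    simpa [mul_assoc] using this
  have h2 := congrArg (fun g => g⁻¹) h1
  simp only [mul_inv_rev, inv_inv] at h2
  have h3 : d.b * d.x * d.b = d.x⁻¹ := by
    rw [← h2, d.hb_inv]; group
  calc d.b * d.x = d.b * d.x * d.b * d.b := by rw [mul_assoc, mul_assoc, d.hbb]; group
    _ = d.x⁻¹ * d.b := by rw [h3]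

lemma b_y (i) : d.b * d.y i = (d.z i)⁻¹ * d.b := by
  have h1 : d.b⁻¹ * (d.y i)⁻¹ * d.b = d.z i := by
    have := congrArg (fun g => g * (d.y i)⁻¹) (d.hby i)
    simpa [mul_assoc] using this
  have h2 := congrArg (fun g => g⁻¹) h1
  simp only [mul_inv_rev, inv_inv] at h2
  have h3 : d.b * d.y i * d.b = (d.z i)⁻¹ := by
    rw [← h2, d.hb_inv]; group
  calc d.b * d.y i = d.b * d.y i * d.b * d.b := by rw [mul_assoc, mul_assoc, d.hbb]; group
    _ = (d.z i)⁻¹ * d.b := by rw [h3]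

lemma b_z (i) : d.b * d.z i = (d.y i)⁻¹ * d.b := by
  have h1 : d.b⁻¹ * (d.z i)⁻¹ * d.b = d.y i := by
    have := congrArg (fun g => g * (d.z i)⁻¹) (d.hbz i)
    simpa [mul_assoc] using this
  have h2 := congrArg (fun g => g⁻¹) h1
  simp only [mul_inv_rev, inv_inv] at h2
  have h3 : d.b * d.z i * d.b = (d.y i)⁻¹ := by
    rw [← h2, d.hb_inv]; group
  calc d.b * d.z i = d.b * d.z i * d.b * d.b := by rw [mul_assoc, mul_assoc, d.hbb]; group
    _ = (d.y i)⁻¹ * d.b := by rw [h3]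

lemma b_a : d.b * d.a = d.a⁻¹ * d.b := by
  have h1 : d.b⁻¹ * d.a⁻¹ * d.b = d.a := by
    have := congrArg (fun g => g * d.a⁻¹) d.hba
    simp only [pow_two] at this
    simpa [mul_assoc] using this
  have h2 := congrArg (fun g => g⁻¹) h1
  simp only [mul_inv_rev, inv_inv] at h2
  have h3 : d.b * d.a * d.b = d.a⁻¹ := by
    rw [← h2, d.hb_inv]; group
  calc d.b * d.a = d.b * d.a * d.b * d.b := by rw [mul_assoc, mul_assoc, d.hbb]; group
    _ = d.a⁻¹ * d.b := by rw [h3]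

end Paper.GData
end Rel2

section Words
variable {G : Type*} [Group G] [Fintype G] (d : Paper.GData G)

namespace Paper.GData

lemma ycommP (f : Fin d.r → ℕ) {s : Finset (Fin d.r)} :
    (s : Set (Fin d.r)).Pairwise (Function.onFun Commute (fun i => d.y i ^ f i)) :=
  fun i _ j _ _ => (d.cyy i j).pow_pow _ _

lemma zcommP (f : Fin d.r → ℕ) {s : Finset (Fin d.r)} :
    (s : Set (Fin d.r)).Pairwise (Function.onFun Commute (fun i => d.z i ^ f i)) :=
  fun i _ j _ _ => (d.czz i j).pow_pow _ _

/-- product of `y i ^ f i` over `s` -/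
def Yp (s : Finset (Fin d.r)) (f : Fin d.r → ℕ) : G :=
  s.noncommProd (fun i => d.y i ^ f i) (d.ycommP f)

def Zp (s : Finset (Fin d.r)) (f : Fin d.r → ℕ) : G :=
  s.noncommProd (fun i => d.z i ^ f i) (d.zcommP f)

lemma x_mem_P : d.x ∈ d.P := Subgroup.subset_closure (Or.inl (Or.inl rfl))
lemma y_mem_P (i) : d.y i ∈ d.P := Subgroup.subset_closure (Or.inl (Or.inr ⟨i, rfl⟩))
lemma z_mem_P (i) : d.z i ∈ d.P := Subgroup.subset_closure (Or.inr ⟨i, rfl⟩)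

lemma Yp_mem (s f) : d.Yp s f ∈ d.P :=
  Subgroup.noncommProd_mem _ _ fun i _ => pow_mem (d.y_mem_P i) _

lemma Zp_mem (s f) : d.Zp s f ∈ d.P :=
  Subgroup.noncommProd_mem _ _ fun i _ => pow_mem (d.z_mem_P i) _

lemma cx_Yp (s f) : Commute d.x (d.Yp s f) :=
  Finset.noncommProd_commute _ _ _ _ fun i _ => (d.cxy i).pow_right _

lemma cx_Zp (s f) : Commute d.x (d.Zp s f) :=
  Finset.noncommProd_commute _ _ _ _ fun i _ => (d.cxz i).pow_right _

lemma Yp_mul (s : Finset (Fin d.r)) (f g : Fin d.r → ℕ) :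
    d.Yp s (f + g) = d.Yp s f * d.Yp s g := by
  unfold Yp
  rw [← Finset.noncommProd_mul_distrib _ _
    (d.ycommP f) (d.ycommP g) (fun i _ j _ hij => (d.cyy i j).pow_pow _ _)]
  exact Finset.noncommProd_congr rfl (fun i _ => by simp [pow_add]) _

lemma Zp_mul (s : Finset (Fin d.r)) (f g : Fin d.r → ℕ) :
    d.Zp s (f + g) = d.Zp s f * d.Zp s g := by
  unfold Zp
  rw [← Finset.noncommProd_mul_distrib _ _
    (d.zcommP f) (d.zcommP g) (fun i _ j _ hij => (d.czz i j).pow_pow _ _)]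
  exact Finset.noncommProd_congr rfl (fun i _ => by simp [pow_add]) _

lemma Yp_single (s : Finset (Fin d.r)) (f : Fin d.r → ℕ) (j) (hj : j ∈ s)
    (h : ∀ i ∈ s, i ≠ j → f i = 0) : d.Yp s f = d.y j ^ f j := by
  unfold Yp
  rw [← Finset.mul_noncommProd_erase s hj _ (d.ycommP f) (d.ycommP f)]
  rw [Finset.noncommProd_eq_pow_card _ _ _ 1 (fun i hi => by
    rw [h i (Finset.mem_of_mem_erase hi) (Finset.ne_of_mem_erase hi), pow_zero]),
    one_pow, mul_one]

lemma Zp_single (s : Finset (Fin d.r)) (f : Fin d.r → ℕ) (j) (hj : j ∈ s)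
    (h : ∀ i ∈ s, i ≠ j → f i = 0) : d.Zp s f = d.z j ^ f j := by
  unfold Zp
  rw [← Finset.mul_noncommProd_erase s hj _ (d.zcommP f) (d.zcommP f)]
  rw [Finset.noncommProd_eq_pow_card _ _ _ 1 (fun i hi => by
    rw [h i (Finset.mem_of_mem_erase hi) (Finset.ne_of_mem_erase hi), pow_zero]),
    one_pow, mul_one]

lemma Yp_zero (s : Finset (Fin d.r)) : d.Yp s 0 = 1 := by
  unfold Yp
  rw [Finset.noncommProd_eq_pow_card _ _ _ 1 (fun i _ => by simp), one_pow]

lemma Zp_zero (s : Finset (Fin d.r)) : d.Zp s 0 = 1 := by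
  unfold Zp
  rw [Finset.noncommProd_eq_pow_card _ _ _ 1 (fun i _ => by simp), one_pow]

/-- `z y = y z x⁻¹` -/
lemma zy (i) : d.z i * d.y i = d.y i * d.z i * d.x⁻¹ :=
  eq_mul_inv_of_mul_eq (d.zyx i)

lemma z_ypow (i) (l : ℕ) : d.z i * d.y i ^ l = d.y i ^ l * d.z i * (d.x ^ l)⁻¹ := by
  induction l with
  | zero => simp
  | succ l ih =>
      calc d.z i * d.y i ^ (l+1) = (d.z i * d.y i ^ l) * d.y i := by rw [pow_succ]; group
        _ = d.y i ^ l * d.z i * ((d.x ^ l)⁻¹ * d.y i) := by rw [ih]; group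
        _ = d.y i ^ l * d.z i * (d.y i * (d.x ^ l)⁻¹) := by
            rw [(((d.cxy i).pow_left l).inv_left).eq]
        _ = d.y i ^ l * (d.z i * d.y i) * (d.x ^ l)⁻¹ := by group
        _ = d.y i ^ l * (d.y i * d.z i * d.x⁻¹) * (d.x ^ l)⁻¹ := by rw [d.zy i]
        _ = d.y i ^ (l+1) * d.z i * (d.x ^ (l+1))⁻¹ := by
            rw [pow_succ, pow_succ, mul_inv_rev]
            group

lemma zpow_ypow (i) (m l : ℕ) :
    d.z i ^ m * d.y i ^ l = d.y i ^ l * d.z i ^ m * (d.x ^ (m * l))⁻¹ := by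
  induction m with
  | zero => simp
  | succ m ih =>
      calc d.z i ^ (m+1) * d.y i ^ l = d.z i ^ m * (d.z i * d.y i ^ l) := by
            rw [pow_succ]; group
        _ = d.z i ^ m * (d.y i ^ l * d.z i * (d.x ^ l)⁻¹) := by rw [d.z_ypow]
        _ = (d.z i ^ m * d.y i ^ l) * d.z i * (d.x ^ l)⁻¹ := by group
        _ = d.y i ^ l * d.z i ^ m * (d.x ^ (m*l))⁻¹ * d.z i * (d.x ^ l)⁻¹ := by rw [ih]
        _ = d.y i ^ l * d.z i ^ m * (d.z i * (d.x ^ (m*l))⁻¹) * (d.x ^ l)⁻¹ := by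
            rw [mul_assoc (d.y i ^ l * d.z i ^ m) _ (d.z i),
              (((d.cxz i).pow_left (m*l)).inv_left).eq]
        _ = d.y i ^ l * d.z i ^ (m+1) * (d.x ^ ((m+1) * l))⁻¹ := by
            rw [pow_succ]
            rw [show (m+1)*l = m*l + l by ring, pow_add, mul_inv_rev]
            group

end Paper.GData
end Words

section Words2
variable {G : Type*} [Group G] [Fintype G] (d : Paper.GData G)

namespace Paper.GData

lemma Yp_cons (s : Finset (Fin d.r)) (i) (hi : i ∉ s) (f) :
    d.Yp (Finset.cons i s hi) f = d.y i ^ f i * d.Yp s f :=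
  Finset.noncommProd_cons _ _ _ _ _

lemma Zp_cons (s : Finset (Fin d.r)) (i) (hi : i ∉ s) (f) :
    d.Zp (Finset.cons i s hi) f = d.z i ^ f i * d.Zp s f :=
  Finset.noncommProd_cons _ _ _ _ _

/-- a power of `z j` commutes with any `y`-word avoiding `j` -/
lemma zpow_Yp_commute (j) (c : ℕ) (f : Fin d.r → ℕ) (s : Finset (Fin d.r)) (hj : j ∉ s) :
    Commute (d.z j ^ c) (d.Yp s f) :=
  Finset.noncommProd_commute _ _ _ _ fun i hi =>
    (((d.cyz' (show i ≠ j from fun h => hj (h ▸ hi))).symm).pow_pow _ _)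

/-- pulling a power of `z j` through a full `y`-word -/
lemma zpow_Yp (j) (c : ℕ) (f : Fin d.r → ℕ) (s : Finset (Fin d.r)) (hj : j ∈ s) :
    d.z j ^ c * d.Yp s f = d.Yp s f * d.z j ^ c * (d.x ^ (c * f j))⁻¹ := by
  have hsplit : d.y j ^ f j * d.Yp (s.erase j) f = d.Yp s f := by
    unfold Yp
    exact Finset.mul_noncommProd_erase s hj (fun i => d.y i ^ f i) (d.ycommP f)
  have herase : j ∉ s.erase j := Finset.notMem_erase j s
  calc d.z j ^ c * d.Yp s f
      = (d.z j ^ c * d.y j ^ f j) * d.Yp (s.erase j) f := by rw [← hsplit]; group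
    _ = d.y j ^ f j * d.z j ^ c * (d.x ^ (c * f j))⁻¹ * d.Yp (s.erase j) f := by
        rw [d.zpow_ypow]
    _ = d.y j ^ f j * d.z j ^ c * d.Yp (s.erase j) f * (d.x ^ (c * f j))⁻¹ := by
        rw [mul_assoc (d.y j ^ f j * d.z j ^ c),
          ((d.cx_Yp (s.erase j) f).pow_left (c * f j)).inv_left.eq, ← mul_assoc]
    _ = d.y j ^ f j * (d.z j ^ c * d.Yp (s.erase j) f) * (d.x ^ (c * f j))⁻¹ := by group
    _ = d.y j ^ f j * (d.Yp (s.erase j) f * d.z j ^ c) * (d.x ^ (c * f j))⁻¹ := by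
        rw [(d.zpow_Yp_commute j c f _ herase).eq]
    _ = d.Yp s f * d.z j ^ c * (d.x ^ (c * f j))⁻¹ := by rw [← hsplit]; group

/-- pulling a `z`-word through a full `y`-word over `univ` -/
lemma Zp_Yp (g f : Fin d.r → ℕ) (s : Finset (Fin d.r)) :
    d.Zp s g * d.Yp Finset.univ f =
      d.Yp Finset.univ f * d.Zp s g * (d.x ^ (∑ i ∈ s, g i * f i))⁻¹ := by
  induction s using Finset.cons_induction with
  | empty =>
      have h1 : d.Zp ∅ g = 1 := Finset.noncommProd_empty _ _
      simp [h1]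
  | cons i s hi ih =>
      rw [d.Zp_cons s i hi g, Finset.sum_cons]
      calc d.z i ^ g i * d.Zp s g * d.Yp Finset.univ f
          = d.z i ^ g i * (d.Zp s g * d.Yp Finset.univ f) := by group
        _ = d.z i ^ g i * (d.Yp Finset.univ f * d.Zp s g * (d.x ^ (∑ i ∈ s, g i * f i))⁻¹) := by
            rw [ih]
        _ = (d.z i ^ g i * d.Yp Finset.univ f) * d.Zp s g * (d.x ^ (∑ i ∈ s, g i * f i))⁻¹ := by
            group
        _ = d.Yp Finset.univ f * d.z i ^ g i * (d.x ^ (g i * f i))⁻¹ * d.Zp s g *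
              (d.x ^ (∑ i ∈ s, g i * f i))⁻¹ := by
            rw [d.zpow_Yp i (g i) f Finset.univ (Finset.mem_univ i)]
        _ = d.Yp Finset.univ f * d.z i ^ g i * d.Zp s g * (d.x ^ (g i * f i))⁻¹ *
              (d.x ^ (∑ i ∈ s, g i * f i))⁻¹ := by
            rw [mul_assoc (d.Yp Finset.univ f * d.z i ^ g i),
              ((d.cx_Zp s g).pow_left (g i * f i)).inv_left.eq, ← mul_assoc]
        _ = d.Yp Finset.univ f * (d.z i ^ g i * d.Zp s g) *
              (d.x ^ (g i * f i + ∑ i ∈ s, g i * f i))⁻¹ := by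
            rw [pow_add, mul_inv_rev]
            group

end Paper.GData
end Words2

section Psi
variable {G : Type*} [Group G] [Fintype G] (d : Paper.GData G)

namespace Paper.GData

/-- the `y`-word with `ZMod p` exponents -/
def Ye (β : Fin d.r → ZMod d.p) : G := d.Yp Finset.univ (fun i => (β i).val)
def Ze (γ : Fin d.r → ZMod d.p) : G := d.Zp Finset.univ (fun i => (γ i).val)

lemma Ye_add (β β' : Fin d.r → ZMod d.p) : d.Ye (β + β') = d.Ye β * d.Ye β' := by
  unfold Ye
  rw [← d.Yp_mul Finset.univ]
  unfold Yp
  exact Finset.noncommProd_congr rfl (fun i _ => by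
    show d.y i ^ ((β + β') i).val = d.y i ^ ((β i).val + (β' i).val)
    rw [Pi.add_apply, ZMod.val_add, S15.pow_mod_eq (d.hyp i), pow_add]) _

lemma Ze_add (γ γ' : Fin d.r → ZMod d.p) : d.Ze (γ + γ') = d.Ze γ * d.Ze γ' := by
  unfold Ze
  rw [← d.Zp_mul Finset.univ]
  unfold Zp
  exact Finset.noncommProd_congr rfl (fun i _ => by
    show d.z i ^ ((γ + γ') i).val = d.z i ^ ((γ i).val + (γ' i).val)
    rw [Pi.add_apply, ZMod.val_add, S15.pow_mod_eq (d.hzp i), pow_add]) _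

lemma Ye_single (i) (c : ZMod d.p) : d.Ye (Pi.single i c) = d.y i ^ c.val := by
  unfold Ye
  rw [d.Yp_single Finset.univ _ i (Finset.mem_univ i) (fun j _ hj => by
    rw [Pi.single_eq_of_ne hj, ZMod.val_zero]), Pi.single_eq_same]

lemma Ze_single (i) (c : ZMod d.p) : d.Ze (Pi.single i c) = d.z i ^ c.val := by
  unfold Ze
  rw [d.Zp_single Finset.univ _ i (Finset.mem_univ i) (fun j _ hj => by
    rw [Pi.single_eq_of_ne hj, ZMod.val_zero]), Pi.single_eq_same]

lemma Ye_zero : d.Ye 0 = 1 := by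
  unfold Ye
  have h : (fun i => ((0 : Fin d.r → ZMod d.p) i).val) = (0 : Fin d.r → ℕ) := by
    funext i; simp
  rw [h, d.Yp_zero]

lemma Ze_zero : d.Ze 0 = 1 := by
  unfold Ze
  have h : (fun i => ((0 : Fin d.r → ZMod d.p) i).val) = (0 : Fin d.r → ℕ) := by
    funext i; simp
  rw [h, d.Zp_zero]

lemma cx_Ye (β) : Commute d.x (d.Ye β) := d.cx_Yp _ _
lemma cx_Ze (γ) : Commute d.x (d.Ze γ) := d.cx_Zp _ _

lemma Ye_mem (β) : d.Ye β ∈ d.P := d.Yp_mem _ _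
lemma Ze_mem (γ) : d.Ze γ ∈ d.P := d.Zp_mem _ _

lemma Ze_Ye (γ β : Fin d.r → ZMod d.p) :
    d.Ze γ * d.Ye β =
      d.Ye β * d.Ze γ * (d.x ^ (∑ i, (γ i).val * (β i).val))⁻¹ :=
  d.Zp_Yp _ _ Finset.univ

/-- the normal-form function `Hei p r → G` -/
def psifun (t : S15.Hei d.p d.r) : G := d.x ^ t.c.val * d.Ye t.v.1 * d.Ze t.v.2

lemma cdot_cast (γ β : Fin d.r → ZMod d.p) :
    S15.Hei.cdot γ β = ((∑ i, (γ i).val * (β i).val : ℕ) : ZMod d.p) := by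
  unfold S15.Hei.cdot
  push_cast
  apply Finset.sum_congr rfl
  intro i _
  rw [ZMod.natCast_val, ZMod.natCast_val, ZMod.cast_id, ZMod.cast_id]

lemma psifun_mul (s t : S15.Hei d.p d.r) :
    d.psifun (s * t) = d.psifun s * d.psifun t := by
  obtain ⟨c, β, γ⟩ := s
  obtain ⟨c', β', γ'⟩ := t
  unfold psifun
  rw [S15.Hei.mul_def]
  simp only
  set S : ℕ := ∑ i, (γ i).val * (β' i).val with hS
  have hx : d.x ^ (c + c' - S15.Hei.cdot γ β').val
      = d.x ^ c.val * d.x ^ c'.val * (d.x ^ S)⁻¹ := by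
    rw [d.cdot_cast, ← hS, S15.pow_val_sub_natCast d.hxp (c + c') S,
      S15.pow_val_add d.hxp]
  have mm : ∀ (e : ℕ) (u w : G), Commute d.x u →
      u * (d.x ^ e * w) = d.x ^ e * (u * w) := fun e u w h => by
    rw [← mul_assoc, ((h.pow_left e).symm).eq, mul_assoc]
  have minv : ∀ (u w : G), Commute d.x u →
      u * ((d.x ^ S)⁻¹ * w) = (d.x ^ S)⁻¹ * (u * w) := fun u w h => by
    rw [← mul_assoc, ((h.pow_left S).inv_left).symm.eq, mul_assoc]
  have h3 : d.Ze γ * (d.Ye β' * d.Ze γ') =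
      d.Ye β' * (d.Ze γ * (d.Ze γ' * (d.x ^ S)⁻¹)) := by
    calc d.Ze γ * (d.Ye β' * d.Ze γ') = (d.Ze γ * d.Ye β') * d.Ze γ' := by group
      _ = (d.Ye β' * d.Ze γ * (d.x ^ S)⁻¹) * d.Ze γ' := by rw [d.Ze_Ye γ β', ← hS]
      _ = d.Ye β' * (d.Ze γ * ((d.x ^ S)⁻¹ * d.Ze γ')) := by group
      _ = d.Ye β' * (d.Ze γ * (d.Ze γ' * (d.x ^ S)⁻¹)) := by
          rw [((d.cx_Ze γ').pow_left S).inv_left.eq]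
  calc d.x ^ (c + c' - S15.Hei.cdot γ β').val * d.Ye (β + β') * d.Ze (γ + γ')
      = d.x ^ c.val * (d.x ^ c'.val * ((d.x ^ S)⁻¹ *
          (d.Ye β * (d.Ye β' * (d.Ze γ * d.Ze γ'))))) := by
        rw [hx, d.Ye_add, d.Ze_add]; group
    _ = d.x ^ c.val * (d.x ^ c'.val * (d.Ye β * (d.Ye β' *
          (d.Ze γ * (d.Ze γ' * (d.x ^ S)⁻¹))))) := by
        conv_rhs => rw [← ((d.cx_Ze γ').pow_left S).inv_left.eq,
          minv _ _ (d.cx_Ze γ), minv _ _ (d.cx_Ye β'), minv _ _ (d.cx_Ye β)]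
    _ = d.x ^ c.val * (d.Ye β * (d.Ze γ * (d.x ^ c'.val * (d.Ye β' * d.Ze γ')))) := by
        rw [mm _ _ _ (d.cx_Ze γ), mm _ _ _ (d.cx_Ye β), h3]
    _ = d.x ^ c.val * d.Ye β * d.Ze γ * (d.x ^ c'.val * d.Ye β' * d.Ze γ') := by
        group

/-- the normal-form homomorphism -/
def psi : S15.Hei d.p d.r →* G := MonoidHom.mk' d.psifun d.psifun_mul

lemma psi_apply (t) : d.psi t = d.x ^ t.c.val * d.Ye t.v.1 * d.Ze t.v.2 := rfl

lemma psi_mem_P (t) : d.psi t ∈ d.P := by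
  rw [psi_apply]
  exact mul_mem (mul_mem (pow_mem d.x_mem_P _) (d.Ye_mem _)) (d.Ze_mem _)

lemma psi_x : d.psi ⟨1, 0⟩ = d.x := by
  have h : d.psi ⟨1, 0⟩ = d.x ^ ((1 : ZMod d.p)).val * d.Ye 0 * d.Ze 0 := rfl
  rw [h, d.Ye_zero, d.Ze_zero, mul_one, mul_one, ZMod.val_one_eq_one_mod,
    Nat.mod_eq_of_lt d.hp1, pow_one]

lemma psi_central (c : ZMod d.p) : d.psi ⟨c, 0⟩ = d.x ^ c.val := by
  have h : d.psi ⟨c, 0⟩ = d.x ^ c.val * d.Ye 0 * d.Ze 0 := rfl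
  rw [h, d.Ye_zero, d.Ze_zero, mul_one, mul_one]

lemma psi_yc (i) (c : ZMod d.p) : d.psi ⟨0, Pi.single i c, 0⟩ = d.y i ^ c.val := by
  have h : d.psi ⟨0, Pi.single i c, 0⟩
      = d.x ^ ((0:ZMod d.p)).val * d.Ye (Pi.single i c) * d.Ze 0 := rfl
  rw [h, d.Ze_zero, mul_one, ZMod.val_zero, pow_zero, one_mul, d.Ye_single]

lemma psi_zc (i) (c : ZMod d.p) : d.psi ⟨0, 0, Pi.single i c⟩ = d.z i ^ c.val := by
  have h : d.psi ⟨0, 0, Pi.single i c⟩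
      = d.x ^ ((0:ZMod d.p)).val * d.Ye 0 * d.Ze (Pi.single i c) := rfl
  rw [h, d.Ye_zero, mul_one, ZMod.val_zero, pow_zero, one_mul, d.Ze_single]

lemma psi_yzc (i) (c : ZMod d.p) :
    d.psi ⟨0, Pi.single i c, Pi.single i 1⟩ = d.y i ^ c.val * d.z i := by
  have h : d.psi ⟨0, Pi.single i c, Pi.single i 1⟩
      = d.x ^ ((0:ZMod d.p)).val * d.Ye (Pi.single i c) * d.Ze (Pi.single i 1) := rfl
  rw [h, ZMod.val_zero, pow_zero, one_mul, d.Ye_single, d.Ze_single,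
    ZMod.val_one_eq_one_mod, Nat.mod_eq_of_lt d.hp1, pow_one]

end Paper.GData
end Psi

section Surj
variable {G : Type*} [Group G] [Fintype G] (d : Paper.GData G)

namespace Paper.GData

instance : NeZero (2 ^ (d.n - 1)) := ⟨pow_ne_zero _ two_ne_zero⟩

/-- the full normal-form function -/
def Phifun (t : S15.Hei d.p d.r × (ZMod (2 ^ (d.n - 1)) × ZMod 2)) : G :=
  d.psi t.1 * d.a ^ t.2.1.val * d.b ^ t.2.2.val

lemma one_lt_npow : 1 < 2 ^ (d.n - 1) := by
  have h := d.hn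
  calc (1:ℕ) < 2 := one_lt_two
    _ = 2 ^ 1 := (pow_one 2).symm
    _ ≤ 2 ^ (d.n - 1) := Nat.pow_le_pow_right (by omega) (by omega)

lemma hJcases (J : ZMod 2) : J.val = 0 ∨ J.val = 1 := by
  have := ZMod.val_lt J
  omega

/-- the image of `Phifun` -/
def SS : Set G := Set.range d.Phifun

lemma one_mem_SS : (1 : G) ∈ d.SS := by
  refine ⟨(1, 0, 0), ?_⟩
  unfold Phifun
  simp

lemma SS_mul_x {s : G} (hs : s ∈ d.SS) : s * d.x ∈ d.SS := by
  obtain ⟨⟨t, I, J⟩, rfl⟩ := hs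
  unfold Phifun
  simp only
  rcases hJcases J with hJ | hJ
  · refine ⟨(t * ⟨1, 0⟩, I, J), ?_⟩
    unfold Phifun
    simp only [hJ, pow_zero, mul_one, map_mul, d.psi_x]
    conv_rhs => rw [mul_assoc, (d.cax.pow_left I.val).eq, ← mul_assoc]
  · refine ⟨(t * ⟨-1, 0⟩, I, J), ?_⟩
    unfold Phifun
    simp only [hJ, pow_one, map_mul]
    have hpsin : d.psi ⟨-1, 0⟩ = d.x⁻¹ := by
      rw [d.psi_central, show (-1 : ZMod d.p) = -(1 : ZMod d.p) by ring,
        S15.pow_val_neg d.hxp, ZMod.val_one_eq_one_mod, Nat.mod_eq_of_lt d.hp1, pow_one]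
    rw [hpsin]
    conv_rhs => rw [mul_assoc, d.bx, ← mul_assoc, mul_assoc (d.psi t),
      ((d.cax.pow_left I.val).inv_right).eq, ← mul_assoc]

lemma SS_mul_a {s : G} (hs : s ∈ d.SS) : s * d.a ∈ d.SS := by
  obtain ⟨⟨t, I, J⟩, rfl⟩ := hs
  unfold Phifun
  simp only
  rcases hJcases J with hJ | hJ
  · refine ⟨(t, I + 1, J), ?_⟩
    unfold Phifun
    simp only [hJ, pow_zero, mul_one]
    rw [S15.pow_val_add d.han, ZMod.val_one_eq_one_mod,
      Nat.mod_eq_of_lt d.one_lt_npow, pow_one, ← mul_assoc]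
  · refine ⟨(t, I - 1, J), ?_⟩
    unfold Phifun
    simp only [hJ, pow_one]
    rw [show (1 : ZMod (2 ^ (d.n - 1))) = ((1 : ℕ) : ZMod (2 ^ (d.n - 1))) from by
        push_cast; ring,
      S15.pow_val_sub_natCast d.han, pow_one]
    conv_rhs => rw [mul_assoc (d.psi t * d.a ^ I.val) d.b d.a, d.b_a]
    group

lemma SS_mul_b {s : G} (hs : s ∈ d.SS) : s * d.b ∈ d.SS := by
  obtain ⟨⟨t, I, J⟩, rfl⟩ := hs
  refine ⟨(t, I, J + 1), ?_⟩
  unfold Phifun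
  simp only
  rw [S15.pow_val_add d.hb2, ZMod.val_one_eq_one_mod, Nat.mod_eq_of_lt one_lt_two,
    pow_one, ← mul_assoc]

lemma SS_mul_y {s : G} (i) (hs : s ∈ d.SS) : s * d.y i ∈ d.SS := by
  obtain ⟨⟨t, I, J⟩, rfl⟩ := hs
  unfold Phifun
  simp only
  rcases hJcases J with hJ | hJ
  · refine ⟨(t * ⟨0, Pi.single i ((d.q ^ I.val : ℕ) : ZMod d.p), 0⟩, I, J), ?_⟩
    unfold Phifun
    simp only [hJ, pow_zero, mul_one, map_mul, d.psi_yc]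
    rw [S15.pow_val_natCast (d.hyp i)]
    conv_rhs => rw [mul_assoc,
      show d.a ^ I.val * d.y i = d.a ^ I.val * d.y i ^ 1 from by rw [pow_one],
      d.apow_ypow i I.val 1, mul_one, ← mul_assoc]
  · refine ⟨(t * ⟨0, 0, Pi.single i (-((d.k ^ I.val : ℕ) : ZMod d.p))⟩, I, J), ?_⟩
    unfold Phifun
    simp only [hJ, pow_one, map_mul, d.psi_zc]
    rw [S15.pow_val_neg (d.hzp i), S15.pow_val_natCast (d.hzp i)]
    conv_rhs => rw [mul_assoc, d.b_y i, ← mul_assoc, mul_assoc (d.psi t),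
      show d.a ^ I.val * (d.z i)⁻¹ = d.a ^ I.val * (d.z i ^ 1)⁻¹ from by rw [pow_one],
      d.apow_zpow_inv i I.val 1, mul_one, ← mul_assoc]

lemma SS_mul_z {s : G} (i) (hs : s ∈ d.SS) : s * d.z i ∈ d.SS := by
  obtain ⟨⟨t, I, J⟩, rfl⟩ := hs
  unfold Phifun
  simp only
  rcases hJcases J with hJ | hJ
  · refine ⟨(t * ⟨0, 0, Pi.single i ((d.k ^ I.val : ℕ) : ZMod d.p)⟩, I, J), ?_⟩
    unfold Phifun
    simp only [hJ, pow_zero, mul_one, map_mul, d.psi_zc]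
    rw [S15.pow_val_natCast (d.hzp i)]
    conv_rhs => rw [mul_assoc,
      show d.a ^ I.val * d.z i = d.a ^ I.val * d.z i ^ 1 from by rw [pow_one],
      d.apow_zpow i I.val 1, mul_one, ← mul_assoc]
  · refine ⟨(t * ⟨0, Pi.single i (-((d.q ^ I.val : ℕ) : ZMod d.p)), 0⟩, I, J), ?_⟩
    unfold Phifun
    simp only [hJ, pow_one, map_mul, d.psi_yc]
    rw [S15.pow_val_neg (d.hyp i), S15.pow_val_natCast (d.hyp i)]
    conv_rhs => rw [mul_assoc, d.b_z i, ← mul_assoc, mul_assoc (d.psi t),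
      show d.a ^ I.val * (d.y i)⁻¹ = d.a ^ I.val * (d.y i ^ 1)⁻¹ from by rw [pow_one],
      d.apow_ypow_inv i I.val 1, mul_one, ← mul_assoc]

/-- subgroup of elements which stabilize `SS` on the right -/
def MM : Subgroup G where
  carrier := {g | ∀ s ∈ d.SS, s * g ∈ d.SS}
  one_mem' := fun s hs => by simpa using hs
  mul_mem' := by
    intro g h hg hh s hs
    rw [← mul_assoc]
    exact hh _ (hg _ hs)
  inv_mem' := by
    intro g hg
    have hpow : ∀ m : ℕ, ∀ s ∈ d.SS, s * g ^ m ∈ d.SS := by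
      intro m
      induction m with
      | zero => intro s hs; simpa using hs
      | succ m ih =>
          intro s hs
          rw [pow_succ, ← mul_assoc]
          exact hg _ (ih _ hs)
    intro s hs
    have ho : g ^ (orderOf g - 1) = g⁻¹ := by
      have h1 : g ^ (orderOf g - 1) * g = 1 := by
        have h2 : orderOf g - 1 + 1 = orderOf g := by
          have := orderOf_pos g
          omega
        rw [← pow_succ, h2, pow_orderOf_eq_one]
      exact eq_inv_of_mul_eq_one_left h1
    rw [← ho]
    exact hpow _ s hs

lemma SS_univ : ∀ g : G, g ∈ d.SS := by
  have hM : Subgroup.closure (({d.x, d.a, d.b} : Set G) ∪ Set.range d.y ∪ Set.range d.z)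
      ≤ d.MM := by
    rw [Subgroup.closure_le]
    rintro g hg
    simp only [Set.mem_union, Set.mem_insert_iff, Set.mem_singleton_iff,
      Set.mem_range] at hg
    rcases hg with (((rfl | rfl | rfl) | ⟨i, rfl⟩) | ⟨i, rfl⟩)
    · exact fun s hs => d.SS_mul_x hs
    · exact fun s hs => d.SS_mul_a hs
    · exact fun s hs => d.SS_mul_b hs
    · exact fun s hs => d.SS_mul_y i hs
    · exact fun s hs => d.SS_mul_z i hs
  intro g
  have hg : g ∈ d.MM := hM (by rw [d.hgen]; trivial)
  simpa using hg 1 d.one_mem_SS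

lemma Phifun_bijective : Function.Bijective d.Phifun := by
  rw [Fintype.bijective_iff_surjective_and_card]
  constructor
  · intro g
    exact d.SS_univ g
  · rw [d.hcard, Fintype.card_prod, Fintype.card_prod, ZMod.card, ZMod.card,
      S15.Hei.card_hei]
    rw [show (2 : ℕ) ^ d.n = 2 ^ (d.n - 1) * 2 from by
      rw [← pow_succ]
      congr 1
      have := d.hn
      omega]

lemma psi_injective : Function.Injective d.psi := by
  intro t t' h
  have : d.Phifun (t, 0, 0) = d.Phifun (t', 0, 0) := by
    unfold Phifun
    simp [h]
  have := d.Phifun_bijective.injective this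
  simpa using this

lemma psi_range : d.psi.range = d.P := by
  apply le_antisymm
  · rintro g ⟨t, rfl⟩
    exact d.psi_mem_P t
  · rw [GData.P, Subgroup.closure_le]
    rintro g hg
    simp only [Set.mem_union, Set.mem_singleton_iff, Set.mem_range] at hg
    rcases hg with ((rfl | ⟨i, rfl⟩) | ⟨i, rfl⟩)
    · exact ⟨⟨1, 0⟩, d.psi_x⟩
    · refine ⟨⟨0, Pi.single i 1, 0⟩, ?_⟩
      rw [d.psi_yc, ZMod.val_one_eq_one_mod, Nat.mod_eq_of_lt d.hp1, pow_one]
    · refine ⟨⟨0, 0, Pi.single i 1⟩, ?_⟩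
      rw [d.psi_zc, ZMod.val_one_eq_one_mod, Nat.mod_eq_of_lt d.hp1, pow_one]

end Paper.GData
end Surj

namespace S15
section HeiSide
variable {p r : ℕ} [NeZero p]

open Hei

/-- the subgroup of `Hei p r` corresponding to a submodule of `Vec p r` -/
def HeiSub (W : Submodule (ZMod p) (Vec p r)) : Subgroup (Hei p r) where
  carrier := {t | t.v ∈ W}
  one_mem' := by simp
  mul_mem' := by
    intro s t hs ht
    simpa using W.add_mem hs ht
  inv_mem' := by
    intro s hs
    simpa using W.neg_mem hs

lemma mem_HeiSub {W : Submodule (ZMod p) (Vec p r)} {t : Hei p r} :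
    t ∈ HeiSub W ↔ t.v ∈ W := Iff.rfl

/-- `W` is a hyperplane (complement spanned by a single vector) -/
def Hyp (W : Submodule (ZMod p) (Vec p r)) : Prop :=
  ∃ v₀, v₀ ∉ W ∧ ∀ u : Vec p r, ∃ c : ZMod p, u - c • v₀ ∈ W

lemma cdot_single_single (i : Fin r) (a b : ZMod p) :
    Hei.cdot (Pi.single i a) (Pi.single i b) = a * b := by
  unfold Hei.cdot
  rw [Finset.sum_eq_single i]
  · simp
  · intro j _ hj
    simp [Pi.single_eq_of_ne hj]
  · simp

lemma central_eq_pow (c : ZMod p) :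
    (⟨c, 0⟩ : Hei p r) = (⟨1, 0⟩ : Hei p r) ^ c.val := by
  rw [Hei.central_pow]
  congr 1
  rw [nsmul_eq_mul, mul_one, ZMod.natCast_val, ZMod.cast_id]

/-- shifting an element of a subgroup containing the center to zero `c`-part -/
lemma memK_shift {K : Subgroup (Hei p r)} (hcen : ∀ c : ZMod p, (⟨c, 0⟩ : Hei p r) ∈ K)
    {t : Hei p r} (ht : t ∈ K) : (⟨0, t.v⟩ : Hei p r) ∈ K := by
  have h : (⟨0, t.v⟩ : Hei p r) = ⟨-t.c, 0⟩ * t := by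
    rw [Hei.central_mul]
    simp
  rw [h]
  exact K.mul_mem (hcen _) ht

lemma heiA {K : Subgroup (Hei p r)} (hr : 0 < r)
    (hnorm : ∀ g : Hei p r, ∀ t ∈ K, g⁻¹ * t * g ∈ K)
    (hcyc : ∃ h : Hei p r, ∀ g : Hei p r, ∃ m : ℤ, (h ^ m)⁻¹ * g ∈ K)
    (hne : K ≠ ⊤) :
    (∀ c : ZMod p, (⟨c, 0⟩ : Hei p r) ∈ K) ∧
      ∃ W : Submodule (ZMod p) (Vec p r), Hyp W ∧ K = HeiSub W := by
  obtain ⟨h, hcy⟩ := hcyc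
  haveI hnormal : K.Normal := by
    constructor
    intro t ht g
    have h2 := hnorm g⁻¹ t ht
    simpa using h2
  -- commutators are in K
  have commK : ∀ u v : Hei p r, u⁻¹ * v⁻¹ * u * v ∈ K := by
    intro u v
    have hmk : ∀ w : Hei p r, ∃ m : ℤ,
        (w : Hei p r ⧸ K) = ((h : Hei p r ⧸ K)) ^ m := by
      intro w
      obtain ⟨m, hm⟩ := hcy w
      exact ⟨m, by
        rw [← QuotientGroup.mk_zpow, eq_comm, QuotientGroup.eq]
        exact hm⟩
    rw [← QuotientGroup.eq_one_iff (N := K) (u⁻¹ * v⁻¹ * u * v)]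
    obtain ⟨m, hm⟩ := hmk u
    obtain ⟨l, hl⟩ := hmk v
    have : ((u⁻¹ * v⁻¹ * u * v : Hei p r) : Hei p r ⧸ K)
        = (u : Hei p r ⧸ K)⁻¹ * (v : Hei p r ⧸ K)⁻¹ * u * v := by
      push_cast
      rfl
    rw [this, hm, hl, ← zpow_neg, ← zpow_neg, ← zpow_add, ← zpow_add, ← zpow_add]
    rw [show -m + -l + m + l = 0 by ring, zpow_zero]
  -- x is in K
  have hxK : (⟨1, 0⟩ : Hei p r) ∈ K := by
    set i : Fin r := ⟨0, hr⟩
    have hc := commK ⟨0, Pi.single i 1, 0⟩ ⟨0, 0, Pi.single i 1⟩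
    have he : ((⟨0, Pi.single i 1, 0⟩ : Hei p r)⁻¹ * (⟨0, 0, Pi.single i 1⟩ : Hei p r)⁻¹ *
        ⟨0, Pi.single i 1, 0⟩ * ⟨0, 0, Pi.single i 1⟩ : Hei p r) = ⟨1, 0⟩ := by
      rw [Hei.inv_def, Hei.inv_def]
      simp only [Hei.mul_def]
      ext
      · simp [cdot_single_single, Hei.cdot_neg_left, Hei.cdot_neg_right]
      · simp
      · simp
    rwa [he] at hc
  have hcen : ∀ c : ZMod p, (⟨c, 0⟩ : Hei p r) ∈ K := by
    intro c
    rw [central_eq_pow]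
    exact K.pow_mem hxK _
  refine ⟨hcen, ?_⟩
  -- the submodule
  refine ⟨{ carrier := {u | (⟨0, u⟩ : Hei p r) ∈ K}
            add_mem' := ?_
            zero_mem' := ?_
            smul_mem' := ?_ }, ?_, ?_⟩
  · intro u u' hu hu'
    have h2 := K.mul_mem hu hu'
    have h3 := memK_shift hcen h2
    simpa using h3
  · exact K.one_mem
  · intro c u hu
    have h2 := K.pow_mem hu c.val
    have h3 := memK_shift hcen h2
    have h4 : ((⟨0, u⟩ : Hei p r) ^ c.val).v = c • u := by
      rw [Hei.pow_v]
      show c.val • u = c • u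
      rw [← Nat.cast_smul_eq_nsmul (ZMod p), ZMod.natCast_val, ZMod.cast_id]
    rwa [h4] at h3
  -- Hyp
  · refine ⟨h.v, ?_, ?_⟩
    · intro hv
      apply hne
      rw [eq_top_iff]
      intro g _
      have hK : h ∈ K := by
        have h5 : h = (⟨h.c, 0⟩ : Hei p r) * ⟨0, h.v⟩ := by
          rw [Hei.central_mul]; simp
        rw [h5]
        exact K.mul_mem (hcen _) hv
      obtain ⟨m, hm⟩ := hcy g
      have : g = h ^ m * ((h ^ m)⁻¹ * g) := by group
      rw [this]
      exact K.mul_mem (K.zpow_mem hK m) hm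
    · intro u
      obtain ⟨m, hm⟩ := hcy ⟨0, u⟩
      refine ⟨(m : ZMod p), ?_⟩
      have h6 := memK_shift hcen hm
      have h7 : ((h ^ m)⁻¹ * (⟨0, u⟩ : Hei p r)).v = u - ((m : ZMod p)) • h.v := by
        rw [Hei.mul_v, Hei.inv_v, Hei.zpow_v]
        rw [Int.cast_smul_eq_zsmul]
        show -(m • h.v) + u = u - m • h.v
        abel
      rwa [h7] at h6
  -- K = HeiSub W
  · ext t
    constructor
    · intro ht
      exact memK_shift hcen ht
    · intro ht
      have h5 : t = (⟨t.c, 0⟩ : Hei p r) * ⟨0, t.v⟩ := by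
        rw [Hei.central_mul]; simp
      rw [h5]
      exact K.mul_mem (hcen _) ht

lemma heiB {W : Submodule (ZMod p) (Vec p r)} (hW : Hyp W) :
    HeiSub W ≠ ⊤ ∧
      (∀ g : Hei p r, ∀ t ∈ HeiSub W, g⁻¹ * t * g ∈ HeiSub W) ∧
      ∃ h : Hei p r, ∀ g : Hei p r, ∃ m : ℤ, (h ^ m)⁻¹ * g ∈ HeiSub W := by
  obtain ⟨v₀, hv₀, hall⟩ := hW
  refine ⟨?_, ?_, ?_⟩
  · intro htop
    apply hv₀
    have : (⟨0, v₀⟩ : Hei p r) ∈ HeiSub W := htop ▸ Subgroup.mem_top _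
    exact this
  · intro g t ht
    have : (g⁻¹ * t * g).v = t.v := by
      rw [Hei.mul_v, Hei.mul_v, Hei.inv_v]
      abel
    rw [mem_HeiSub, this]
    exact ht
  · refine ⟨⟨0, v₀⟩, fun g => ?_⟩
    obtain ⟨c, hc⟩ := hall g.v
    refine ⟨(c.val : ℤ), ?_⟩
    rw [mem_HeiSub]
    have h8 : ((c.val : ℤ)) • v₀ = c • v₀ := by
      rw [← Int.cast_smul_eq_zsmul (ZMod p)]
      norm_cast
      rw [← Nat.cast_smul_eq_nsmul (ZMod p), ZMod.natCast_zmod_val]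
    have h7 : (((⟨0, v₀⟩ : Hei p r) ^ (c.val : ℤ))⁻¹ * g).v = g.v - c • v₀ := by
      rw [Hei.mul_v, Hei.inv_v, Hei.zpow_v]
      show -((c.val : ℤ) • v₀) + g.v = g.v - c • v₀
      rw [h8]
      abel
    rwa [h7]

end HeiSide
end S15

namespace S15
section Count
variable {p r : ℕ} [Fact p.Prime]

open Hei

/-- dot pairing on `Vec` -/
def dot (w u : Vec p r) : ZMod p := Hei.cdot w.1 u.1 + Hei.cdot w.2 u.2

lemma dot_add_right (w u u' : Vec p r) : dot w (u + u') = dot w u + dot w u' := by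
  unfold dot
  rw [Prod.fst_add, Prod.snd_add, cdot_add_right, cdot_add_right]
  ring

lemma dot_smul_right (w : Vec p r) (c : ZMod p) (u : Vec p r) :
    dot w (c • u) = c * dot w u := by
  unfold dot
  rw [Prod.smul_fst, Prod.smul_snd, cdot_smul_right, cdot_smul_right]
  ring

lemma dot_smul_left (w : Vec p r) (c : ZMod p) (u : Vec p r) :
    dot (c • w) u = c * dot w u := by
  unfold dot
  rw [Prod.smul_fst, Prod.smul_snd, cdot_smul_left, cdot_smul_left]
  ring

lemma dot_sub_smul (w u u₀ : Vec p r) (c : ZMod p) :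
    dot w (u - c • u₀) = dot w u - c * dot w u₀ := by
  have h : u - c • u₀ + c • u₀ = u := by abel
  have h2 := dot_add_right w (u - c • u₀) (c • u₀)
  rw [h, dot_smul_right] at h2
  linear_combination -h2

/-- the "hyperplane" associated to a nonzero vector -/
def Wset (w : Vec p r) : Submodule (ZMod p) (Vec p r) where
  carrier := {u | dot w u = 0}
  add_mem' := by
    intro u u' hu hu'
    simp only [Set.mem_setOf_eq] at *
    rw [dot_add_right, hu, hu', add_zero]
  zero_mem' := by
    have h := dot_smul_right w 0 0
    simpa using h
  smul_mem' := by
    intro c u hu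
    simp only [Set.mem_setOf_eq] at *
    rw [dot_smul_right, hu, mul_zero]

lemma mem_Wset {w u : Vec p r} : u ∈ Wset w ↔ dot w u = 0 := Iff.rfl

lemma cdot_single_right (u : Fin r → ZMod p) (i : Fin r) (a : ZMod p) :
    Hei.cdot u (Pi.single i a) = u i * a := by
  unfold Hei.cdot
  rw [Finset.sum_eq_single i]
  · simp
  · intro j _ hj
    simp [Pi.single_eq_of_ne hj]
  · simp

/-- basis vectors -/
def E1 (i : Fin r) : Vec p r := (Pi.single i 1, 0)
def E2 (i : Fin r) : Vec p r := (0, Pi.single i 1)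

lemma dot_E1 (w : Vec p r) (i) : dot w (E1 i) = w.1 i := by
  unfold dot E1
  rw [cdot_single_right]
  simp

lemma dot_E2 (w : Vec p r) (i) : dot w (E2 i) = w.2 i := by
  unfold dot E2
  rw [cdot_single_right]
  simp

lemma decomp (u : Vec p r) :
    u = ∑ i, u.1 i • E1 i + ∑ i, u.2 i • E2 i := by
  have h1 : (∑ i, u.1 i • E1 i : Vec p r) = (u.1, 0) := by
    rw [Prod.ext_iff]
    constructor
    · rw [Prod.fst_sum]
      funext j
      rw [Finset.sum_apply]
      rw [Finset.sum_eq_single j]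
      · simp [E1]
      · intro i _ hij
        simp [E1, Pi.single_eq_of_ne (Ne.symm hij)]
      · simp
    · rw [Prod.snd_sum]
      simp [E1]
  have h2 : (∑ i, u.2 i • E2 i : Vec p r) = (0, u.2) := by
    rw [Prod.ext_iff]
    constructor
    · rw [Prod.fst_sum]
      simp [E2]
    · rw [Prod.snd_sum]
      funext j
      rw [Finset.sum_apply]
      rw [Finset.sum_eq_single j]
      · simp [E2]
      · intro i _ hij
        simp [E2, Pi.single_eq_of_ne (Ne.symm hij)]
      · simp
  rw [h1, h2]
  ext <;> simp

lemma exists_dot_one {w : Vec p r} (hw : w ≠ 0) : ∃ u₀, dot w u₀ = 1 := by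
  have h : w.1 ≠ 0 ∨ w.2 ≠ 0 := by
    by_contra hc
    push_neg at hc
    exact hw (Prod.ext hc.1 hc.2)
  rcases h with h | h
  · obtain ⟨i, hi⟩ := Function.ne_iff.mp h
    refine ⟨(Pi.single i (w.1 i)⁻¹, 0), ?_⟩
    unfold dot
    rw [cdot_single_right]
    simp [mul_inv_cancel₀ hi]
  · obtain ⟨i, hi⟩ := Function.ne_iff.mp h
    refine ⟨(0, Pi.single i (w.2 i)⁻¹), ?_⟩
    unfold dot
    rw [cdot_single_right]
    simp [mul_inv_cancel₀ hi]

lemma hypH1 {w : Vec p r} (hw : w ≠ 0) : Hyp (Wset w) := by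
  obtain ⟨u₀, hu₀⟩ := exists_dot_one hw
  refine ⟨u₀, ?_, ?_⟩
  · rw [mem_Wset, hu₀]
    exact one_ne_zero
  · intro u
    refine ⟨dot w u, ?_⟩
    rw [mem_Wset, dot_sub_smul, hu₀, mul_one, sub_self]

lemma scalar_unique {w : Vec p r} (hw : w ≠ 0) {c c' : ZMod p}
    (h : c • w = c' • w) : c = c' := by
  by_contra hcc
  apply hw
  have h2 : (c - c') • w = 0 := by
    rw [sub_smul, h, sub_self]
  have h3 : c - c' ≠ 0 := sub_ne_zero_of_ne hcc
  have := congrArg (fun v => (c - c')⁻¹ • v) h2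
  simpa [smul_smul, inv_mul_cancel₀ h3] using this

lemma hypH3 {w w' : Vec p r} (hw : w ≠ 0) (hw' : w' ≠ 0) (hww : Wset w = Wset w') :
    ∃ c : ZMod p, c ≠ 0 ∧ w' = c • w := by
  obtain ⟨u₀, hu₀⟩ := exists_dot_one hw
  have key : ∀ u, dot w' u = dot w' u₀ * dot w u := by
    intro u
    have hmem : u - dot w u • u₀ ∈ Wset w := by
      rw [mem_Wset, dot_sub_smul, hu₀, mul_one, sub_self]
    rw [hww, mem_Wset, dot_sub_smul] at hmem
    have h4 := sub_eq_zero.mp hmem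
    rw [h4]
    ring
  have hept : w' = dot w' u₀ • w := by
    rw [Prod.ext_iff]
    constructor
    · funext i
      have h5 := key (E1 i)
      rw [dot_E1, dot_E1] at h5
      simpa using h5
    · funext i
      have h5 := key (E2 i)
      rw [dot_E2, dot_E2] at h5
      simpa using h5
  exact ⟨dot w' u₀, fun hc0 => hw' (by rw [hept, hc0, zero_smul]), hept⟩

lemma hypH4 {w : Vec p r} {c : ZMod p} (hc : c ≠ 0) : Wset (c • w) = Wset w := by
  ext u
  rw [mem_Wset, mem_Wset, dot_smul_left, mul_eq_zero]
  simp [hc]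

end Count
end S15

namespace S15
section Count2
variable {p r : ℕ} [Fact p.Prime]

lemma hyp_unique_c {W : Submodule (ZMod p) (Vec p r)} {v₀ : Vec p r} (hv₀ : v₀ ∉ W)
    {u : Vec p r} {c c' : ZMod p} (h : u - c • v₀ ∈ W) (h' : u - c' • v₀ ∈ W) :
    c = c' := by
  by_contra hcc
  apply hv₀
  have h2 : (c' - c) • v₀ ∈ W := by
    have h3 := W.sub_mem h h'
    have h4 : u - c • v₀ - (u - c' • v₀) = (c' - c) • v₀ := by
      rw [sub_smul]
      abel
    rwa [h4] at h3
  have h5 : c' - c ≠ 0 := sub_ne_zero_of_ne (Ne.symm hcc)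
  have h6 := W.smul_mem (c' - c)⁻¹ h2
  rwa [smul_smul, inv_mul_cancel₀ h5, one_smul] at h6

lemma hypH2 {W : Submodule (ZMod p) (Vec p r)} (hW : Hyp W) :
    ∃ w : Vec p r, w ≠ 0 ∧ Wset w = W := by
  obtain ⟨v₀, hv₀, hall⟩ := hW
  set φ : Vec p r → ZMod p := fun u => Classical.choose (hall u) with hφ
  have hspec : ∀ u, u - φ u • v₀ ∈ W := fun u => Classical.choose_spec (hall u)
  have hadd : ∀ u u', φ (u + u') = φ u + φ u' := by
    intro u u'
    refine hyp_unique_c hv₀ (hspec (u + u')) ?_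
    have h2 := W.add_mem (hspec u) (hspec u')
    have h3 : u - φ u • v₀ + (u' - φ u' • v₀) = u + u' - (φ u + φ u') • v₀ := by
      rw [add_smul]
      abel
    rwa [h3] at h2
  have hsmul : ∀ (c : ZMod p) u, φ (c • u) = c * φ u := by
    intro c u
    refine hyp_unique_c hv₀ (hspec (c • u)) ?_
    have h2 := W.smul_mem c (hspec u)
    have h3 : c • (u - φ u • v₀) = c • u - (c * φ u) • v₀ := by
      rw [smul_sub, smul_smul]
    rwa [h3] at h2
  have hzero : φ 0 = 0 := by
    have h2 := hsmul 0 0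
    rwa [zero_smul, zero_mul] at h2
  have hmem_iff : ∀ u, u ∈ W ↔ φ u = 0 := by
    intro u
    constructor
    · intro hu
      refine hyp_unique_c hv₀ (hspec u) ?_
      rwa [zero_smul, sub_zero]
    · intro hu
      have h2 := hspec u
      rwa [hu, zero_smul, sub_zero] at h2
  have hφv₀ : φ v₀ = 1 := by
    refine hyp_unique_c hv₀ (hspec v₀) ?_
    rw [one_smul, sub_self]
    exact W.zero_mem
  -- sums
  have hsum : ∀ (s : Finset (Fin r)) (f : Fin r → Vec p r),
      φ (∑ i ∈ s, f i) = ∑ i ∈ s, φ (f i) := by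
    intro s
    induction s using Finset.cons_induction with
    | empty => intro f; simp [hzero]
    | cons i s hi ih =>
        intro f
        rw [Finset.sum_cons, Finset.sum_cons, hadd, ih]
  set w : Vec p r := ((fun i => φ (E1 i)), (fun i => φ (E2 i))) with hwdef
  have h1 : ∀ u, dot w u = φ u := by
    intro u
    have e1 : φ u = ∑ i, u.1 i * φ (E1 i) + ∑ i, u.2 i * φ (E2 i) := by
      conv_lhs => rw [decomp u]
      rw [hadd, hsum Finset.univ (fun i => u.1 i • E1 i),
        hsum Finset.univ (fun i => u.2 i • E2 i)]
      simp_rw [hsmul]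
    rw [e1]
    unfold dot Hei.cdot
    congr 1
    · exact Finset.sum_congr rfl fun i _ => mul_comm _ _
    · exact Finset.sum_congr rfl fun i _ => mul_comm _ _
  refine ⟨w, ?_, ?_⟩
  · intro h0
    have h2 := h1 v₀
    rw [h0, hφv₀] at h2
    unfold dot at h2
    rw [Prod.fst_zero, Prod.snd_zero, Hei.cdot_zero_left, Hei.cdot_zero_left,
      add_zero] at h2
    exact one_ne_zero h2.symm
  · ext u
    rw [mem_Wset, h1]
    exact (hmem_iff u).symm

end Count2
end S15

namespace S15
section Count3
variable {p r : ℕ} [Fact p.Prime]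

lemma scalar_unique' {M : Type*} [AddCommGroup M] [Module (ZMod p) M]
    {w : M} (hw : w ≠ 0) {c c' : ZMod p} (h : c • w = c' • w) : c = c' := by
  by_contra hcc
  apply hw
  have h2 : (c - c') • w = 0 := by
    rw [sub_smul, h, sub_self]
  have h3 : c - c' ≠ 0 := sub_ne_zero_of_ne hcc
  have h4 := congrArg (fun v => (c - c')⁻¹ • v) h2
  simpa [smul_smul, inv_mul_cancel₀ h3] using h4

lemma smul_ne_zero' {M : Type*} [AddCommGroup M] [Module (ZMod p) M]
    {w : M} (hw : w ≠ 0) {c : ZMod p} (hc : c ≠ 0) : c • w ≠ 0 := by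
  intro h0
  apply hw
  have h4 := congrArg (fun v => c⁻¹ • v) h0
  simpa [smul_smul, inv_mul_cancel₀ hc] using h4

/-- a chosen nonzero vector representing a hyperplane -/
noncomputable def repW (W : {W : Submodule (ZMod p) (Vec p r) // Hyp W}) :
    {w : Vec p r // w ≠ 0} :=
  ⟨Classical.choose (hypH2 W.2), (Classical.choose_spec (hypH2 W.2)).1⟩

lemma repW_spec (W : {W : Submodule (ZMod p) (Vec p r) // Hyp W}) :
    Wset (repW W).1 = W.1 := (Classical.choose_spec (hypH2 W.2)).2

noncomputable def Fa :
    {W : Submodule (ZMod p) (Vec p r) // Hyp W} × {c : ZMod p // c ≠ 0} →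
      {w : Vec p r // w ≠ 0} :=
  fun t => ⟨t.2.1 • (repW t.1).1, smul_ne_zero' (repW t.1).2 t.2.2⟩

lemma Wset_Fa (t : {W : Submodule (ZMod p) (Vec p r) // Hyp W} × {c : ZMod p // c ≠ 0}) :
    Wset (Fa t).1 = t.1.1 := by
  show Wset (t.2.1 • (repW t.1).1) = t.1.1
  rw [hypH4 t.2.2, repW_spec]

lemma Fa_bijective : Function.Bijective (Fa (p := p) (r := r)) := by
  constructor
  · rintro ⟨W, c⟩ ⟨W', c'⟩ h
    have h1 : Wset (Fa (W, c)).1 = W.1 := Wset_Fa _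
    have h2 : Wset (Fa (W', c')).1 = W'.1 := Wset_Fa _
    rw [h] at h1
    have hWW : W = W' := Subtype.ext (h1.symm.trans h2)
    subst hWW
    have h3 : c.1 • (repW W).1 = c'.1 • (repW W).1 := congrArg Subtype.val h
    exact Prod.ext rfl (Subtype.ext (scalar_unique' (repW W).2 h3))
  · rintro ⟨w, hw⟩
    set W : {W : Submodule (ZMod p) (Vec p r) // Hyp W} := ⟨Wset w, hypH1 hw⟩ with hW
    have hww : Wset (repW W).1 = Wset w := repW_spec W
    obtain ⟨c, hc, hcw⟩ := hypH3 (repW W).2 hw hww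
    exact ⟨(W, ⟨c, hc⟩), Subtype.ext hcw.symm⟩

lemma card_ne_zero {α : Type*} [Fintype α] [DecidableEq α] (a : α) :
    Nat.card {x : α // x ≠ a} = Fintype.card α - 1 := by
  rw [Nat.card_eq_fintype_card, Fintype.card_subtype_compl, Fintype.card_subtype_eq]

lemma card_Vec : Fintype.card (Vec p r) = p ^ (2 * r) := by
  rw [Fintype.card_prod, Fintype.card_fun, ZMod.card, Fintype.card_fin]
  ring

lemma card_NZc : Nat.card {c : ZMod p // c ≠ 0} = p - 1 := by
  rw [card_ne_zero, ZMod.card]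

lemma pm1_pos : 0 < p - 1 := by
  have h := (Fact.out : p.Prime).two_le
  omega

/-- Count (a): the number of hyperplanes. -/
theorem countA :
    Nat.card {W : Submodule (ZMod p) (Vec p r) // Hyp W} = (p ^ (2 * r) - 1) / (p - 1) := by
  have h1 := Nat.card_eq_of_bijective _ (Fa_bijective (p := p) (r := r))
  rw [Nat.card_prod, card_NZc, card_ne_zero, card_Vec] at h1
  exact (Nat.div_eq_of_eq_mul_left pm1_pos h1.symm).symm

end Count3
end S15

namespace S15
section Count4a
variable {p r : ℕ}

/-- the distinguished vectors `y_i^t z_i` -/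
def uvec (t : ZMod p) (i : Fin r) : Vec p r := (Pi.single i t, Pi.single i 1)

/-- the containment condition -/
def CondJ (t : ZMod p) (W : Submodule (ZMod p) (Vec p r)) : Prop :=
  ∀ i, uvec t i ∈ W

/-- shape set for part (b) -/
def ShapeB (p r κ N1 : ℕ) : Type _ :=
  {w : Vec p r // w ≠ 0 ∧ ∃ j, 1 ≤ j ∧ j ≤ N1 ∧ w.2 = (-((κ : ZMod p) ^ j)) • w.1}

/-- hyperplanes counted in part (b) -/
def HypB (p r κ N1 : ℕ) : Type _ :=
  {W : Submodule (ZMod p) (Vec p r) //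
    Hyp W ∧ ∃ j, 1 ≤ j ∧ j ≤ N1 ∧ CondJ ((κ : ZMod p) ^ j) W}

end Count4a

section Count4
variable {p r : ℕ} [Fact p.Prime]

lemma condJ_Wset {w : Vec p r} (t : ZMod p) :
    CondJ t (Wset w) ↔ w.2 = (-t) • w.1 := by
  constructor
  · intro h
    funext i
    have h2 := h i
    rw [mem_Wset] at h2
    unfold dot uvec at h2
    rw [cdot_single_right, cdot_single_right, mul_one] at h2
    show w.2 i = -t * w.1 i
    have : w.1 i * t + w.2 i = 0 := h2
    linear_combination this
  · intro h i
    rw [mem_Wset]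
    unfold dot uvec
    rw [cdot_single_right, cdot_single_right, mul_one, h]
    show w.1 i * t + (-t) * w.1 i = 0
    ring

variable (κ N1 : ℕ)

def Fb1 : {j : ℕ // 1 ≤ j ∧ j ≤ N1} × {w1 : Fin r → ZMod p // w1 ≠ 0} →
    ShapeB p r κ N1 :=
  fun t => ⟨(t.2.1, (-((κ : ZMod p) ^ t.1.1)) • t.2.1),
    ⟨fun h0 => t.2.2 (congrArg Prod.fst h0),
     t.1.1, t.1.2.1, t.1.2.2, rfl⟩⟩

variable {κ N1}

lemma Fb1_bijective
    (hinj : ∀ j j', 1 ≤ j → j ≤ N1 → 1 ≤ j' → j' ≤ N1 →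
      (κ : ZMod p) ^ j = (κ : ZMod p) ^ j' → j = j') :
    Function.Bijective (Fb1 (p := p) (r := r) κ N1) := by
  constructor
  · rintro ⟨⟨j, hj⟩, ⟨w1, hw1⟩⟩ ⟨⟨j', hj'⟩, ⟨w1', hw1'⟩⟩ h
    have h1 := congrArg (fun t => t.1.1) h
    simp only [Fb1] at h1
    have h2 := congrArg (fun t => t.1.2) h
    simp only [Fb1] at h2
    -- h1 : w1 = w1', h2 : (-κ^j) • w1 = (-κ^j') • w1'
    have hww : w1 = w1' := h1
    subst hww
    have h3 : (-((κ : ZMod p) ^ j)) = (-((κ : ZMod p) ^ j')) :=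
      scalar_unique' hw1 h2
    have h4 : (κ : ZMod p) ^ j = (κ : ZMod p) ^ j' := by
      have := congrArg Neg.neg h3
      simpa using this
    have := hinj j j' hj.1 hj.2 hj'.1 hj'.2 h4
    subst this
    rfl
  · rintro ⟨w, hw0, j, hj1, hj2, hsh⟩
    have hw1 : w.1 ≠ 0 := by
      intro h0
      apply hw0
      have h5 : w.2 = 0 := by
        rw [hsh, h0, smul_zero]
      exact Prod.ext h0 h5
    refine ⟨(⟨j, hj1, hj2⟩, ⟨w.1, hw1⟩), ?_⟩
    apply Subtype.ext
    show (w.1, (-((κ : ZMod p) ^ j)) • w.1) = w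
    exact Prod.ext rfl hsh.symm

noncomputable def Fb2 : HypB p r κ N1 × {c : ZMod p // c ≠ 0} → ShapeB p r κ N1 :=
  fun t =>
    ⟨(Fa (⟨t.1.1, t.1.2.1⟩, t.2)).1, (Fa (⟨t.1.1, t.1.2.1⟩, t.2)).2, by
      obtain ⟨j, hj1, hj2, hcond⟩ := t.1.2.2
      refine ⟨j, hj1, hj2, ?_⟩
      rw [← condJ_Wset]
      have hWs : Wset (Fa (⟨t.1.1, t.1.2.1⟩, t.2)).1 = t.1.1 := Wset_Fa _
      rw [hWs]
      exact hcond⟩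

lemma Fb2_bijective : Function.Bijective (Fb2 (p := p) (r := r) (κ := κ) (N1 := N1)) := by
  constructor
  · rintro ⟨W, c⟩ ⟨W', c'⟩ h
    have hval0 : (Fb2 (W, c)).1 = (Fb2 (W', c')).1 := congrArg Subtype.val h
    have hval : (Fa (⟨W.1, W.2.1⟩, c)) = (Fa (⟨W'.1, W'.2.1⟩, c')) :=
      Subtype.ext hval0
    have h1 : Wset (Fa (⟨W.1, W.2.1⟩, c)).1 = W.1 := Wset_Fa _
    have h2 : Wset (Fa (⟨W'.1, W'.2.1⟩, c')).1 = W'.1 := Wset_Fa _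
    rw [hval] at h1
    have hWW : W.1 = W'.1 := h1.symm.trans h2
    have hWW' : W = W' := Subtype.ext hWW
    subst hWW'
    have h3 : c.1 • (repW ⟨W.1, W.2.1⟩).1 = c'.1 • (repW ⟨W.1, W.2.1⟩).1 :=
      congrArg Subtype.val hval
    have : c = c' := Subtype.ext (scalar_unique' (repW ⟨W.1, W.2.1⟩).2 h3)
    rw [this]
  · rintro ⟨w, hw0, j, hj1, hj2, hsh⟩
    have hyp : Hyp (Wset w) := hypH1 hw0
    have hcond : CondJ ((κ : ZMod p) ^ j) (Wset w) := (condJ_Wset _).mpr hsh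
    set W : HypB p r κ N1 := ⟨Wset w, hyp, j, hj1, hj2, hcond⟩ with hWdef
    have hww : Wset (repW (⟨W.1, W.2.1⟩ :
        {W : Submodule (ZMod p) (Vec p r) // Hyp W})).1 = Wset w := repW_spec _
    obtain ⟨c, hc, hcw⟩ := hypH3 (repW ⟨W.1, W.2.1⟩).2 hw0 hww
    exact ⟨(W, ⟨c, hc⟩), Subtype.ext hcw.symm⟩

lemma card_Jt : Nat.card {j : ℕ // 1 ≤ j ∧ j ≤ N1} = N1 := by
  have e : {j : ℕ // 1 ≤ j ∧ j ≤ N1} ≃ Fin N1 :=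
    { toFun := fun j => ⟨j.1 - 1, by omega⟩
      invFun := fun i => ⟨i.1 + 1, by omega⟩
      left_inv := fun j => by
        apply Subtype.ext
        have := j.2
        simp
        omega
      right_inv := fun i => by
        apply Fin.ext
        simp }
  rw [Nat.card_congr e, Nat.card_eq_fintype_card, Fintype.card_fin]

lemma card_NZr : Nat.card {w1 : Fin r → ZMod p // w1 ≠ 0} = p ^ r - 1 := by
  rw [card_ne_zero, Fintype.card_fun, ZMod.card, Fintype.card_fin]

/-- Count (b) -/
theorem countB
    (hinj : ∀ j j', 1 ≤ j → j ≤ N1 → 1 ≤ j' → j' ≤ N1 →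
      (κ : ZMod p) ^ j = (κ : ZMod p) ^ j' → j = j') :
    Nat.card (HypB p r κ N1) = N1 * ((p ^ r - 1) / (p - 1)) := by
  have h1 := Nat.card_eq_of_bijective _ (Fb1_bijective (p := p) (r := r) hinj)
  have h2 := Nat.card_eq_of_bijective _ (Fb2_bijective (p := p) (r := r) (κ := κ) (N1 := N1))
  rw [Nat.card_prod, card_Jt, card_NZr] at h1
  rw [Nat.card_prod, card_NZc] at h2
  have hdvd : (p - 1) ∣ (p ^ r - 1) := by
    have := Nat.sub_dvd_pow_sub_pow p 1 r
    rwa [one_pow] at this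
  have h3 : Nat.card (HypB p r κ N1) * (p - 1) = (N1 * ((p ^ r - 1) / (p - 1))) * (p - 1) :=
    calc Nat.card (HypB p r κ N1) * (p - 1) = N1 * (p ^ r - 1) := h2.trans h1.symm
      _ = (N1 * ((p ^ r - 1) / (p - 1))) * (p - 1) := by
          rw [mul_assoc, Nat.div_mul_cancel hdvd]
  exact Nat.eq_of_mul_eq_mul_right pm1_pos h3

end Count4
end S15

section Final
variable {G : Type*} [Group G] [Fintype G] (d : Paper.GData G)

namespace Paper.GData

lemma mapW_le (W : Submodule (ZMod d.p) (S15.Vec d.p d.r)) :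
    Subgroup.map d.psi (S15.HeiSub W) ≤ d.P := by
  rintro g ⟨t, _, rfl⟩
  exact d.psi_mem_P t

lemma mem_mapW {W : Submodule (ZMod d.p) (S15.Vec d.p d.r)} {t : S15.Hei d.p d.r} :
    d.psi t ∈ Subgroup.map d.psi (S15.HeiSub W) ↔ t ∈ S15.HeiSub W := by
  constructor
  · rintro ⟨t', ht', heq⟩
    rwa [← d.psi_injective heq]
  · exact fun h => ⟨t, h, rfl⟩

lemma mapW_inj {W W' : Submodule (ZMod d.p) (S15.Vec d.p d.r)}
    (h : Subgroup.map d.psi (S15.HeiSub W) = Subgroup.map d.psi (S15.HeiSub W')) :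
    W = W' := by
  have h1 : S15.HeiSub W = S15.HeiSub W' :=
    Subgroup.map_injective d.psi_injective h
  ext v
  constructor
  · intro hv
    have h2 : (⟨0, v⟩ : S15.Hei d.p d.r) ∈ S15.HeiSub W := hv
    rw [h1] at h2
    exact h2
  · intro hv
    have h2 : (⟨0, v⟩ : S15.Hei d.p d.r) ∈ S15.HeiSub W' := hv
    rw [← h1] at h2
    exact h2

/-- backward direction: every hyperplane gives a subgroup in the counted set -/
lemma SaB {W : Submodule (ZMod d.p) (S15.Vec d.p d.r)} (hW : S15.Hyp W) :
    Subgroup.map d.psi (S15.HeiSub W) ≤ d.P ∧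
      Subgroup.map d.psi (S15.HeiSub W) ≠ d.P ∧
      Paper.NormalIn d.P (Subgroup.map d.psi (S15.HeiSub W)) ∧
      Paper.CyclicQuot d.P (Subgroup.map d.psi (S15.HeiSub W)) := by
  obtain ⟨hne, hnorm, hcyc⟩ := S15.heiB hW
  refine ⟨d.mapW_le W, ?_, ?_, ?_⟩
  · intro heq
    apply hne
    have h1 : Subgroup.comap d.psi (Subgroup.map d.psi (S15.HeiSub W)) = S15.HeiSub W :=
      Subgroup.comap_map_eq_self_of_injective d.psi_injective _
    rw [heq, ← d.psi_range] at h1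
    rw [← h1]
    ext t
    simp only [Subgroup.mem_comap, Subgroup.mem_top, iff_true]
    exact ⟨t, rfl⟩
  · intro h hh g hg
    rw [← d.psi_range] at hh
    obtain ⟨th, rfl⟩ := hh
    obtain ⟨tg, htg, rfl⟩ := hg
    refine ⟨th⁻¹ * tg * th, hnorm th tg htg, ?_⟩
    simp [map_mul, map_inv]
  · obtain ⟨h0', hcyc'⟩ := hcyc
    refine ⟨d.psi h0', d.psi_mem_P h0', ?_⟩
    intro g hg
    rw [← d.psi_range] at hg
    obtain ⟨tg, rfl⟩ := hg
    obtain ⟨m, hm⟩ := hcyc' tg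
    refine ⟨m, ?_⟩
    have : (d.psi h0' ^ m)⁻¹ * d.psi tg = d.psi ((h0' ^ m)⁻¹ * tg) := by
      simp [map_mul, map_inv, map_zpow]
    rw [this]
    exact ⟨_, hm, rfl⟩

/-- forward direction -/
lemma SaF {K : Subgroup G} (hle : K ≤ d.P) (hne : K ≠ d.P)
    (hnorm : Paper.NormalIn d.P K) (hcyc : Paper.CyclicQuot d.P K) :
    ∃ W : Submodule (ZMod d.p) (S15.Vec d.p d.r),
      S15.Hyp W ∧ K = Subgroup.map d.psi (S15.HeiSub W) := by
  set K' := Subgroup.comap d.psi K with hK'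
  have hmapK : Subgroup.map d.psi K' = K :=
    Subgroup.map_comap_eq_self (by rw [d.psi_range]; exact hle)
  have hnorm' : ∀ g : S15.Hei d.p d.r, ∀ t ∈ K', g⁻¹ * t * g ∈ K' := by
    intro g t ht
    have h1 := hnorm (d.psi g) (d.psi_mem_P g) (d.psi t) ht
    show d.psi (g⁻¹ * t * g) ∈ K
    simpa [map_mul, map_inv] using h1
  have hcyc' : ∃ h : S15.Hei d.p d.r, ∀ g : S15.Hei d.p d.r,
      ∃ m : ℤ, (h ^ m)⁻¹ * g ∈ K' := by
    obtain ⟨h, hhP, hcy⟩ := hcyc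
    rw [← d.psi_range] at hhP
    obtain ⟨th, rfl⟩ := hhP
    refine ⟨th, fun g => ?_⟩
    obtain ⟨m, hm⟩ := hcy (d.psi g) (d.psi_mem_P g)
    refine ⟨m, ?_⟩
    show d.psi ((th ^ m)⁻¹ * g) ∈ K
    simpa [map_mul, map_inv, map_zpow] using hm
  have hne' : K' ≠ ⊤ := by
    intro htop
    apply hne
    rw [← hmapK, htop]
    have : Subgroup.map d.psi ⊤ = d.psi.range := by
      ext g
      simp [Subgroup.mem_map, MonoidHom.mem_range]
    rw [this, d.psi_range]
  haveI : Fact d.p.Prime := ⟨d.hp⟩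
  obtain ⟨hcen, W, hW, hKW⟩ := S15.heiA (by have := d.hr; omega) hnorm' hcyc' hne'
  exact ⟨W, hW, by rw [← hmapK, hKW]⟩

/-- condition (b) translation -/
lemma condB_iff {W : Submodule (ZMod d.p) (S15.Vec d.p d.r)} (j : ℕ) :
    Subgroup.closure (({d.x} : Set G) ∪ Set.range fun i => d.y i ^ d.k ^ j * d.z i) ≤
        Subgroup.map d.psi (S15.HeiSub W) ↔
      S15.CondJ ((d.k : ZMod d.p) ^ j) W := by
  rw [Subgroup.closure_le]
  constructor
  · intro h i
    have hyz : (d.y i ^ d.k ^ j * d.z i) ∈ Subgroup.map d.psi (S15.HeiSub W) := by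
      apply h
      exact Or.inr ⟨i, rfl⟩
    have hpsival : d.psi ⟨0, Pi.single i ((d.k ^ j : ℕ) : ZMod d.p), Pi.single i 1⟩
        = d.y i ^ d.k ^ j * d.z i := by
      rw [d.psi_yzc, S15.pow_val_natCast (d.hyp i)]
    rw [← hpsival] at hyz
    have h2 := d.mem_mapW.mp hyz
    have h3 : (⟨0, Pi.single i ((d.k ^ j : ℕ) : ZMod d.p), Pi.single i 1⟩ :
        S15.Hei d.p d.r).v ∈ W := h2
    have h4 : (S15.uvec ((d.k : ZMod d.p) ^ j) i) ∈ W := by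
      have hcast : ((d.k ^ j : ℕ) : ZMod d.p) = (d.k : ZMod d.p) ^ j := by push_cast; ring
      rw [S15.uvec, ← hcast]
      exact h3
    exact h4
  · intro h g hg
    rcases hg with hgx | ⟨i, rfl⟩
    · have hx : g = d.x := hgx
      rw [SetLike.mem_coe, hx, ← d.psi_x, d.mem_mapW]
      show (0 : S15.Vec d.p d.r) ∈ W
      exact W.zero_mem
    · have hpsival : d.psi ⟨0, Pi.single i ((d.k ^ j : ℕ) : ZMod d.p), Pi.single i 1⟩
          = d.y i ^ d.k ^ j * d.z i := by
        rw [d.psi_yzc, S15.pow_val_natCast (d.hyp i)]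
      show d.y i ^ d.k ^ j * d.z i ∈ Subgroup.map d.psi (S15.HeiSub W)
      rw [← hpsival, d.mem_mapW]
      show (Pi.single i ((d.k ^ j : ℕ) : ZMod d.p), Pi.single i 1) ∈ W
      have hcast : ((d.k ^ j : ℕ) : ZMod d.p) = (d.k : ZMod d.p) ^ j := by push_cast; ring
      rw [hcast]
      exact h i

/-- power injectivity from the order hypothesis -/
lemma kpow_inj : ∀ j j', 1 ≤ j → j ≤ 2 ^ (d.n - 1) → 1 ≤ j' → j' ≤ 2 ^ (d.n - 1) →
    (d.k : ZMod d.p) ^ j = (d.k : ZMod d.p) ^ j' → j = j' := by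
  intro j j' h1 h2 h1' h2' heq
  haveI : Fact d.p.Prime := ⟨d.hp⟩
  have hk0 : (d.k : ZMod d.p) ≠ 0 := by
    intro h0
    have ho := d.hordk
    have hpw := pow_orderOf_eq_one ((d.k : ZMod d.p))
    rw [ho, h0, zero_pow (by positivity)] at hpw
    exact one_ne_zero hpw.symm
  set u : (ZMod d.p)ˣ := Units.mk0 _ hk0 with hu
  have hucoe : (u : ZMod d.p) = (d.k : ZMod d.p) := rfl
  have huj : u ^ j = u ^ j' := by
    apply Units.ext
    rw [Units.val_pow_eq_pow_val, Units.val_pow_eq_pow_val, hucoe]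
    exact heq
  have hordu : orderOf u = 2 ^ (d.n - 1) := by
    rw [← orderOf_units, hucoe, d.hordk]
  have hmod := pow_eq_pow_iff_modEq.mp huj
  rw [hordu] at hmod
  have hmod' : j % 2 ^ (d.n - 1) = j' % 2 ^ (d.n - 1) := hmod
  set N := 2 ^ (d.n - 1) with hN
  rcases Nat.lt_or_ge j N with hlt | hge
  · rw [Nat.mod_eq_of_lt hlt] at hmod'
    rcases Nat.lt_or_ge j' N with hlt' | hge'
    · rw [Nat.mod_eq_of_lt hlt'] at hmod'
      exact hmod'
    · have hj' : j' = N := by omega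
      rw [hj', Nat.mod_self] at hmod'
      omega
  · have hj : j = N := by omega
    rw [hj, Nat.mod_self] at hmod'
    rcases Nat.lt_or_ge j' N with hlt' | hge'
    · rw [Nat.mod_eq_of_lt hlt'] at hmod'
      omega
    · omega

end Paper.GData
end Final



/-- (a) The number of subgroups `K ⊴ P` with `K ≠ P` and `P/K`
cyclic equals `(p^{2r} − 1)/(p − 1)`; (b) among these, the number of `K` containing
`⟨x, y₁^{k^j}z₁, …, y_r^{k^j}z_r⟩` for some `1 ≤ j ≤ 2^{n-1}` equals
`2^{n-1}·(p^r − 1)/(p − 1)`. -/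
theorem stmt15 {G : Type*} [Group G] [Fintype G] (d : Paper.GData G) :
    Set.ncard {K : Subgroup G | K ≤ d.P ∧ K ≠ d.P ∧
        Paper.NormalIn d.P K ∧ Paper.CyclicQuot d.P K} =
      (d.p ^ (2 * d.r) - 1) / (d.p - 1) ∧
    Set.ncard {K : Subgroup G | (K ≤ d.P ∧ K ≠ d.P ∧
        Paper.NormalIn d.P K ∧ Paper.CyclicQuot d.P K) ∧
        ∃ j, 1 ≤ j ∧ j ≤ 2 ^ (d.n - 1) ∧
          Subgroup.closure (({d.x} : Set G) ∪ Set.range fun i => d.y i ^ d.k ^ j * d.z i) ≤ K} =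
      2 ^ (d.n - 1) * ((d.p ^ d.r - 1) / (d.p - 1)) := by
  haveI : Fact d.p.Prime := ⟨d.hp⟩
  constructor
  · -- part (a)
    set s : Set (Subgroup G) := {K : Subgroup G | K ≤ d.P ∧ K ≠ d.P ∧
        Paper.NormalIn d.P K ∧ Paper.CyclicQuot d.P K} with hs
    have hbij : Function.Bijective
        (fun W : {W : Submodule (ZMod d.p) (S15.Vec d.p d.r) // S15.Hyp W} =>
          (⟨Subgroup.map d.psi (S15.HeiSub W.1), d.SaB W.2⟩ : ↥s)) := by
      constructor
      · intro W W' h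
        exact Subtype.ext (d.mapW_inj (congrArg Subtype.val h))
      · rintro ⟨K, hle, hne, hnorm, hcyc⟩
        obtain ⟨W, hW, hKW⟩ := d.SaF hle hne hnorm hcyc
        exact ⟨⟨W, hW⟩, Subtype.ext hKW.symm⟩
    rw [← Nat.card_coe_set_eq, ← Nat.card_eq_of_bijective _ hbij, S15.countA]
  · -- part (b)
    set s : Set (Subgroup G) := {K : Subgroup G | (K ≤ d.P ∧ K ≠ d.P ∧
        Paper.NormalIn d.P K ∧ Paper.CyclicQuot d.P K) ∧
        ∃ j, 1 ≤ j ∧ j ≤ 2 ^ (d.n - 1) ∧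
          Subgroup.closure (({d.x} : Set G) ∪
            Set.range fun i => d.y i ^ d.k ^ j * d.z i) ≤ K} with hs
    have hbij : Function.Bijective
        (fun W : S15.HypB d.p d.r d.k (2 ^ (d.n - 1)) =>
          (⟨Subgroup.map d.psi (S15.HeiSub W.1), d.SaB W.2.1, by
            obtain ⟨j, hj1, hj2, hcond⟩ := W.2.2
            exact ⟨j, hj1, hj2, (d.condB_iff j).mpr hcond⟩⟩ : ↥s)) := by
      constructor
      · intro W W' h
        exact Subtype.ext (d.mapW_inj (congrArg Subtype.val h))
      · rintro ⟨K, ⟨hle, hne, hnorm, hcyc⟩, j, hj1, hj2, hcl⟩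
        obtain ⟨W, hW, hKW⟩ := d.SaF hle hne hnorm hcyc
        rw [hKW] at hcl
        exact ⟨⟨W, hW, j, hj1, hj2, (d.condB_iff j).mp hcl⟩, Subtype.ext hKW.symm⟩
    rw [← Nat.card_coe_set_eq, ← Nat.card_eq_of_bijective _ hbij,
      S15.countB d.kpow_inj]
end
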